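/- arXiv:1411.6723 — 4 statements merged into one kernel-verified Lean document; each statement's English description precedes it below -/
import Mathlib

section
/- Let X be a finite simple graph on n vertices. Then ϑ(X)·ϑ̄(X) ≥ n, where ϑ(X) is the supremum of ∑_{x,x'} M_{x,x'} over real positive semidefinite matrices M indexed by V(X) with tr(M) = 1 and M_{x,x'} = 0 whenever x is adjacent to x', and ϑ̄(X) is the infimum of t ∈ ℝ such that there exists a real positive semidefinite matrix N indexed by V(X) with N_{x,x} = t for all x, N_{x,x'} = 0 whenever x is adjacent to x', and N − J positive semidefinite (J the all-ones matrix). Moreover, if X is vertex-transitive then ϑ(X)·ϑ̄(X) = n. -/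
open Matrix
set_option linter.unusedSectionVars false
set_option maxHeartbeats 1000000

/-- The Lovász theta function `ϑ(Z)`. -/
noncomputable def lovTheta {γ : Type*} [Fintype γ] (Z : SimpleGraph γ) : ℝ :=
  sSup {r : ℝ | ∃ M : Matrix γ γ ℝ, M.PosSemidef ∧ M.trace = 1 ∧
    (∀ z z', Z.Adj z z' → M z z' = 0) ∧ r = ∑ z, ∑ z', M z z'}

/-- The dual formulation `ϑ̄(Z) = Θ^{S₊}(Z)`. -/
noncomputable def lovThetaBar {γ : Type*} [Fintype γ] (Z : SimpleGraph γ) : ℝ :=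
  sInf {t : ℝ | ∃ N : Matrix γ γ ℝ, N.PosSemidef ∧ (∀ z, N z z = t) ∧
    (∀ z z', Z.Adj z z' → N z z' = 0) ∧
    (N - Matrix.of fun _ _ => (1 : ℝ)).PosSemidef}

section helpers
variable {γ : Type*} [Fintype γ] [Nonempty γ]


private lemma psd_sum_le {A : Matrix γ γ ℝ} (h : A.PosSemidef) :
    ∑ z, ∑ z', A z z' ≤ (Fintype.card γ : ℝ) * A.trace := by
  obtain ⟨m, v, hv⟩ := Matrix.posSemidef_iff_eq_sum_vecMulVec.mp h
  obtain ⟨B, rfl⟩ : ∃ B : Matrix (Fin m) γ ℝ, A = Bᴴ * B :=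
    ⟨Matrix.of v, by ext i j; simp [hv, Matrix.mul_apply, Matrix.sum_apply, vecMulVec_apply]⟩
  have e1 : ∀ z, ∑ z', ∑ k, B k z * B k z' = ∑ k, B k z * ∑ z', B k z' := by
    intro z; rw [Finset.sum_comm]
    exact Finset.sum_congr rfl fun k _ => (Finset.mul_sum _ _ _).symm
  have h1 : ∑ z, ∑ z', (Bᴴ * B) z z' = ∑ k, (∑ z, B k z) ^ 2 := by
    simp only [Matrix.mul_apply, conjTranspose_apply, star_trivial]
    simp_rw [e1]
    rw [Finset.sum_comm]
    exact Finset.sum_congr rfl fun k _ => by rw [← Finset.sum_mul, sq]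
  have h2 : (Bᴴ * B).trace = ∑ k, ∑ z, (B k z) ^ 2 := by
    simp only [Matrix.trace, Matrix.diag, Matrix.mul_apply, conjTranspose_apply, star_trivial, sq]
    exact Finset.sum_comm
  rw [h1, h2, Finset.mul_sum]
  refine Finset.sum_le_sum fun k _ => ?_
  have := sq_sum_le_card_mul_sum_sq (s := Finset.univ) (f := fun z => B k z)
  simpa [Finset.card_univ] using this


private lemma psd_smul {c : ℝ} (hc : 0 ≤ c) {M : Matrix γ γ ℝ} (h : M.PosSemidef) :
    (c • M).PosSemidef := by
  refine Matrix.PosSemidef.of_dotProduct_mulVec_nonneg ?_ fun x => ?_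
  · rw [Matrix.IsHermitian, conjTranspose_smul, star_trivial, h.1]
  · rw [smul_mulVec, dotProduct_smul, smul_eq_mul]
    exact mul_nonneg hc (h.dotProduct_mulVec_nonneg x)

private lemma psd_sum {ι : Type*} {s : Finset ι} {f : ι → Matrix γ γ ℝ}
    (h : ∀ i ∈ s, (f i).PosSemidef) : (∑ i ∈ s, f i).PosSemidef :=
  Finset.sum_induction f _ (fun _ _ ha hb => ha.add hb) Matrix.PosSemidef.zero h

private lemma J_herm : (Matrix.of fun _ _ => (1:ℝ) : Matrix γ γ ℝ).IsHermitian := by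
  ext i j; simp [Matrix.conjTranspose_apply]

private lemma dot_J {x : γ → ℝ} :
    star x ⬝ᵥ (Matrix.of fun _ _ => (1:ℝ) : Matrix γ γ ℝ) *ᵥ x = (∑ i, x i) ^ 2 := by
  simp [mulVec, dotProduct, sq, ← Finset.sum_mul]

private lemma key_construct [DecidableEq γ] (X : SimpleGraph γ)
    (htrans : ∀ u v : γ, ∃ φ : X ≃g X, φ u = v)
    {M : Matrix γ γ ℝ} (hM : M.PosSemidef) (htr : M.trace = 1)
    (hedge : ∀ z z', X.Adj z z' → M z z' = 0)
    {r : ℝ} (hr : r = ∑ z, ∑ z', M z z') (hrpos : 0 < r) :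
    ∃ N : Matrix γ γ ℝ, N.PosSemidef ∧ (∀ z, N z z = (Fintype.card γ : ℝ) / r) ∧
      (∀ z z', X.Adj z z' → N z z' = 0) ∧
      (N - Matrix.of fun _ _ => (1 : ℝ)).PosSemidef := by
  classical
  have hn : 0 < (Fintype.card γ : ℝ) := Nat.cast_pos.mpr Fintype.card_pos
  set n : ℝ := (Fintype.card γ : ℝ) with hn_def
  set G : Finset (Equiv.Perm γ) :=
    Finset.univ.filter (fun e => ∀ a b, X.Adj (e a) (e b) ↔ X.Adj a b) with hG_def
  have hGmem : ∀ e : Equiv.Perm γ, e ∈ G ↔ ∀ a b, X.Adj (e a) (e b) ↔ X.Adj a b := by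
    intro e; simp [hG_def]
  have h1G : (1 : Equiv.Perm γ) ∈ G := (hGmem 1).mpr (by simp)
  have hsymmG : ∀ {e : Equiv.Perm γ}, e ∈ G → (e.symm : Equiv.Perm γ) ∈ G := by
    intro e he
    rw [hGmem] at he ⊢
    intro a b
    conv_rhs => rw [← e.apply_symm_apply a, ← e.apply_symm_apply b]
    exact (he _ _).symm
  have htransG : ∀ {e f : Equiv.Perm γ}, e ∈ G → f ∈ G → e.trans f ∈ G := by
    intro e f he hf
    rw [hGmem] at he hf ⊢
    intro a b
    simpa using (hf (e a) (e b)).trans (he a b)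
  have hgpos : 0 < (G.card : ℝ) := by exact_mod_cast Finset.card_pos.mpr ⟨1, h1G⟩
  set g : ℝ := (G.card : ℝ) with hg_def
  have hψmem : ∀ φ : X ≃g X, (φ.toEquiv : Equiv.Perm γ) ∈ G := by
    intro φ
    rw [hGmem]
    intro a b
    exact φ.map_adj_iff
  -- invariance of averages
  have hGsum : ∀ (f : γ → ℝ) (v w : γ),
      ∑ e ∈ G, f (e.symm v) = ∑ e ∈ G, f (e.symm w) := by
    intro f v w
    obtain ⟨φ, hφ⟩ := htrans v w
    have hψ := hψmem φ
    have hwv : (φ.toEquiv : Equiv.Perm γ).symm w = v := by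
      rw [← hφ]; exact φ.toEquiv.symm_apply_apply v
    refine Finset.sum_nbij' (fun e => e.trans φ.toEquiv) (fun e => e.trans φ.toEquiv.symm)
      (fun a ha => htransG ha hψ) (fun a ha => htransG ha (hsymmG hψ)) ?_ ?_ ?_
    · intro a _; ext x
      simp only [Equiv.trans_apply]
      exact φ.toEquiv.symm_apply_apply (a x)
    · intro a _; ext x
      simp only [Equiv.trans_apply]
      exact φ.toEquiv.apply_symm_apply (a x)
    · intro a _
      congr 1
      simp [Equiv.symm_trans_apply, hwv]
  -- the averaged matrix
  set A : Matrix γ γ ℝ := ∑ e ∈ G, M.submatrix ⇑e.symm ⇑e.symm with hA_def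
  have hAapp : ∀ i j, A i j = ∑ e ∈ G, M (e.symm i) (e.symm j) := by
    intro i j; simp [hA_def, Matrix.sum_apply]
  have hApsd : A.PosSemidef := psd_sum fun e _ => hM.submatrix _
  have hAedge : ∀ z z', X.Adj z z' → A z z' = 0 := by
    intro z z' hadj
    rw [hAapp]
    refine Finset.sum_eq_zero fun e he => ?_
    have h2 := (hGmem e).mp he (e.symm z) (e.symm z')
    rw [Equiv.apply_symm_apply, Equiv.apply_symm_apply] at h2
    exact hedge _ _ (h2.mp hadj)
  have htr' : ∑ u, M u u = 1 := by simpa [Matrix.trace, Matrix.diag] using htr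
  have hdiagtot : ∑ v, A v v = g := by
    simp_rw [hAapp]
    rw [Finset.sum_comm]
    have h2 : ∀ e : Equiv.Perm γ, ∑ v, M (e.symm v) (e.symm v) = 1 := fun e =>
      (Equiv.sum_comp e.symm (fun u => M u u)).trans htr'
    rw [Finset.sum_congr rfl fun e _ => h2 e]
    simp [hg_def]
  have hAdiag : ∀ v, A v v = g / n := by
    intro v
    have hconst : ∀ w, A w w = A v v := fun w => by
      rw [hAapp, hAapp]; exact hGsum (fun u => M u u) w v
    have h2 : n * A v v = g := by
      rw [← hdiagtot, Finset.sum_congr rfl fun w _ => hconst w]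
      simp [Finset.sum_const, Finset.card_univ, nsmul_eq_mul, hn_def]
    rw [eq_div_iff hn.ne']
    linarith
  have hArow_eq : ∀ v, ∑ j, A v j = ∑ e ∈ G, ∑ u, M (e.symm v) u := by
    intro v
    simp_rw [hAapp]
    rw [Finset.sum_comm]
    exact Finset.sum_congr rfl fun e _ => Equiv.sum_comp e.symm (fun u => M (e.symm v) u)
  have hrowtot : ∑ v, ∑ j, A v j = g * r := by
    rw [Finset.sum_congr rfl fun v _ => hArow_eq v, Finset.sum_comm]
    have h2 : ∀ e : Equiv.Perm γ, ∑ v, ∑ u, M (e.symm v) u = r := fun e => by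
      rw [Equiv.sum_comp e.symm (fun w => ∑ u, M w u)]; exact hr.symm
    rw [Finset.sum_congr rfl fun e _ => h2 e]
    simp [hg_def, mul_comm]
  have hArow : ∀ v, ∑ j, A v j = g * r / n := by
    intro v
    have hconst : ∀ w, ∑ j, A w j = ∑ j, A v j := fun w => by
      rw [hArow_eq, hArow_eq]; exact hGsum (fun u => ∑ u', M u u') w v
    have h2 : n * ∑ j, A v j = g * r := by
      rw [← hrowtot, Finset.sum_congr rfl fun w _ => hconst w]
      simp [Finset.sum_const, Finset.card_univ, nsmul_eq_mul, hn_def]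
    rw [eq_div_iff hn.ne']
    linarith
  have hg' : g ≠ 0 := ne_of_gt hgpos
  have hrne : r ≠ 0 := ne_of_gt hrpos
  have hc : (0:ℝ) ≤ n ^ 2 / (r * g) := by positivity
  set c : ℝ := n ^ 2 / (r * g) with hc_def
  set N : Matrix γ γ ℝ := c • A with hN_def
  have hNapp : ∀ i j, N i j = c * A i j := fun i j => rfl
  have hNpsd : N.PosSemidef := psd_smul hc hApsd
  have hNdiag : ∀ z, N z z = n / r := by
    intro z
    rw [hNapp, hAdiag, hc_def]
    field_simp
  have hNedge : ∀ z z', X.Adj z z' → N z z' = 0 := fun z z' h => by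
    rw [hNapp, hAedge z z' h, mul_zero]
  have hNrow : ∀ v, ∑ j, N v j = n := by
    intro v
    simp_rw [hNapp]
    rw [← Finset.mul_sum, hArow, hc_def]
    field_simp
  have hNsymm : ∀ i j, N j i = N i j := by
    intro i j
    have h2 := hNpsd.1.apply i j
    rwa [star_trivial] at h2
  have hNcol : ∀ j, ∑ v, N v j = n := fun j => by
    rw [Finset.sum_congr rfl fun v _ => hNsymm j v]
    exact hNrow j
  refine ⟨N, hNpsd, hNdiag, hNedge, Matrix.PosSemidef.of_dotProduct_mulVec_nonneg (hNpsd.1.sub J_herm) fun x => ?_⟩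
  set σ : ℝ := ∑ i, x i with hσ
  set y : γ → ℝ := fun i => x i - σ / n with hy_def
  have hy : ∑ i, y i = 0 := by
    have h2 : ∑ i, y i = σ - n * (σ / n) := by
      simp only [hy_def]
      rw [Finset.sum_sub_distrib]
      simp [Finset.sum_const, Finset.card_univ, nsmul_eq_mul, hn_def, hσ]
    rw [h2, mul_div_cancel₀ _ hn.ne', sub_self]
  have hybit : (0:ℝ) ≤ ∑ i, y i * ∑ j, N i j * y j := by
    simpa [dotProduct, mulVec] using hNpsd.dotProduct_mulVec_nonneg y
  have hexp : ∀ i, ∑ j, N i j * x j = (∑ j, N i j * y j) + σ := by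
    intro i
    have h3 : ∀ j, N i j * x j = N i j * y j + (σ / n) * N i j := fun j => by
      simp only [hy_def]; ring
    rw [Finset.sum_congr rfl fun j _ => h3 j, Finset.sum_add_distrib, ← Finset.mul_sum, hNrow,
      div_mul_cancel₀ _ hn.ne']
  have hcolsum : ∑ i, ∑ j, N i j * y j = 0 := by
    rw [Finset.sum_comm]
    have h4 : ∀ j, ∑ i, N i j * y j = n * y j := fun j => by
      rw [← Finset.sum_mul, hNcol]
    rw [Finset.sum_congr rfl fun j _ => h4 j, ← Finset.mul_sum, hy, mul_zero]
  have hmain : star x ⬝ᵥ N *ᵥ x = (∑ i, y i * ∑ j, N i j * y j) + σ * σ := by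
    have expand : star x ⬝ᵥ N *ᵥ x = ∑ i, x i * ∑ j, N i j * x j := by
      simp [dotProduct, mulVec]
    rw [expand, Finset.sum_congr rfl fun i _ => by rw [hexp i]]
    have h5 : ∀ i, x i * ((∑ j, N i j * y j) + σ)
        = y i * (∑ j, N i j * y j) + (σ / n) * (∑ j, N i j * y j) + σ * x i := fun i => by
      simp only [hy_def]; ring
    rw [Finset.sum_congr rfl fun i _ => h5 i, Finset.sum_add_distrib, Finset.sum_add_distrib,
      ← Finset.mul_sum, hcolsum, mul_zero, add_zero, ← Finset.mul_sum, ← hσ]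
  have hJx : star x ⬝ᵥ (Matrix.of fun _ _ => (1:ℝ) : Matrix γ γ ℝ) *ᵥ x = σ * σ := by
    rw [dot_J, ← hσ, sq]
  rw [sub_mulVec, dotProduct_sub, hmain, hJx]
  linarith [hybit]

private lemma nI_sub_J_psd [DecidableEq γ] :
    (((Fintype.card γ : ℝ) • (1 : Matrix γ γ ℝ)) - Matrix.of fun _ _ => (1:ℝ)).PosSemidef := by
  refine Matrix.PosSemidef.of_dotProduct_mulVec_nonneg ?_ fun x => ?_
  · exact Matrix.IsHermitian.sub (by rw [Matrix.IsHermitian, conjTranspose_smul, star_trivial,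
      conjTranspose_one]) J_herm
  · have key := sq_sum_le_card_mul_sum_sq (s := Finset.univ) (f := fun z => x z)
    have a1 : star x ⬝ᵥ (((Fintype.card γ : ℝ) • (1 : Matrix γ γ ℝ)) *ᵥ x)
        = (Fintype.card γ : ℝ) * ∑ i, x i ^ 2 := by
      simp only [smul_mulVec, dotProduct_smul, Matrix.one_mulVec, dotProduct, sq,
        Finset.mul_sum, star_trivial, smul_eq_mul]
      refine Finset.sum_congr rfl fun i _ => ?_
      simp [Pi.smul_apply]; ring
    rw [sub_mulVec, dotProduct_sub, a1, dot_J, sub_nonneg]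
    simpa [Finset.card_univ] using key

private lemma psd_entries_nonneg {A : Matrix γ γ ℝ} (h : A.PosSemidef) :
    0 ≤ ∑ z, ∑ z', A z z' := by
  simpa [dotProduct, mulVec] using h.dotProduct_mulVec_nonneg (fun _ => 1)

private lemma psd_diag_nonneg {A : Matrix γ γ ℝ} (h : A.PosSemidef) (z : γ) :
    0 ≤ A z z := by
  classical
  simpa [dotProduct, mulVec, Pi.single_apply] using h.dotProduct_mulVec_nonneg (Pi.single z 1)


variable {γ : Type*} [Fintype γ] [Nonempty γ]


end helpers

theorem stmt_7 {γ : Type*} [Fintype γ] [Nonempty γ] (X : SimpleGraph γ) :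
    (Fintype.card γ : ℝ) ≤ lovTheta X * lovThetaBar X ∧
    ((∀ u v : γ, ∃ φ : X ≃g X, φ u = v) →
      lovTheta X * lovThetaBar X = (Fintype.card γ : ℝ)) := by
  classical
  have hn : 0 < (Fintype.card γ : ℝ) := Nat.cast_pos.mpr Fintype.card_pos
  set n : ℝ := (Fintype.card γ : ℝ) with hn_def
  set S1 : Set ℝ := {r : ℝ | ∃ M : Matrix γ γ ℝ, M.PosSemidef ∧ M.trace = 1 ∧
    (∀ z z', X.Adj z z' → M z z' = 0) ∧ r = ∑ z, ∑ z', M z z'} with hS1_def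
  set S2 : Set ℝ := {t : ℝ | ∃ N : Matrix γ γ ℝ, N.PosSemidef ∧ (∀ z, N z z = t) ∧
    (∀ z z', X.Adj z z' → N z z' = 0) ∧
    (N - Matrix.of fun _ _ => (1 : ℝ)).PosSemidef} with hS2_def
  have hT : lovTheta X = sSup S1 := rfl
  have hB : lovThetaBar X = sInf S2 := rfl
  have hS1_one : (1:ℝ) ∈ S1 := by
    refine ⟨n⁻¹ • 1, psd_smul (inv_nonneg.mpr hn.le) Matrix.PosSemidef.one, ?_, ?_, ?_⟩
    · rw [Matrix.trace_smul, Matrix.trace_one, smul_eq_mul, hn_def]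
      exact inv_mul_cancel₀ hn.ne'
    · intro z z' h
      simp [Matrix.smul_apply, Matrix.one_apply_ne h.ne]
    · have h2 : ∀ z:γ, ∑ z', (n⁻¹ • (1:Matrix γ γ ℝ)) z z' = n⁻¹ := by
        intro z
        simp [Matrix.smul_apply, Matrix.one_apply]
      rw [Finset.sum_congr rfl fun z _ => h2 z]
      rw [Finset.sum_const, Finset.card_univ, nsmul_eq_mul, ← hn_def]
      rw [mul_inv_cancel₀ hn.ne']
  have hS1_ub : ∀ r ∈ S1, r ≤ n := by
    rintro r ⟨M, hpsd, htrace, he, rfl⟩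
    calc ∑ z, ∑ z', M z z' ≤ n * M.trace := psd_sum_le hpsd
    _ = n := by rw [htrace, mul_one]
  have hS1_bdd : BddAbove S1 := ⟨n, hS1_ub⟩
  have hS1_ne : S1.Nonempty := ⟨1, hS1_one⟩
  have hS2_n : n ∈ S2 := by
    refine ⟨n • 1, psd_smul hn.le Matrix.PosSemidef.one, ?_, ?_, nI_sub_J_psd⟩
    · intro z; simp [Matrix.smul_apply, Matrix.one_apply_eq]
    · intro z z' h; simp [Matrix.smul_apply, Matrix.one_apply_ne h.ne]
  have hS2_lb : ∀ t ∈ S2, (1:ℝ) ≤ t := by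
    rintro t ⟨N, hpsd, hdiag, he, hNJ⟩
    obtain ⟨z⟩ := ‹Nonempty γ›
    have h2 := psd_diag_nonneg hNJ z
    have h3 : ((N - Matrix.of fun _ _ => (1:ℝ)) : Matrix γ γ ℝ) z z = t - 1 := by
      simp [Matrix.sub_apply, hdiag]
    rw [h3] at h2
    linarith
  have hS2_bdd : BddBelow S2 := ⟨1, hS2_lb⟩
  have hS2_ne : S2.Nonempty := ⟨n, hS2_n⟩
  have hθ1 : 1 ≤ sSup S1 := le_csSup hS1_bdd hS1_one
  have hθpos : 0 < sSup S1 := lt_of_lt_of_le one_pos hθ1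
  have hb1 : 1 ≤ sInf S2 := le_csInf hS2_ne hS2_lb
  have hbpos : 0 < sInf S2 := lt_of_lt_of_le one_pos hb1
  have hpart1 : ∀ t ∈ S2, n / t ≤ sSup S1 := by
    rintro t ht
    obtain ⟨N, hpsd, hdiag, he, hNJ⟩ := ht
    have ht1 : 1 ≤ t := hS2_lb t ⟨N, hpsd, hdiag, he, hNJ⟩
    have htpos : 0 < t := lt_of_lt_of_le one_pos ht1
    have hcpos : 0 < (n*t)⁻¹ := by positivity
    have htrN : N.trace = n * t := by
      simp [Matrix.trace, Matrix.diag, hdiag, Finset.sum_const, Finset.card_univ,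
        nsmul_eq_mul, hn_def]
    have hmem : (∑ z, ∑ z', ((n*t)⁻¹ • N) z z') ∈ S1 := by
      refine ⟨(n*t)⁻¹ • N, psd_smul hcpos.le hpsd, ?_, ?_, rfl⟩
      · rw [Matrix.trace_smul, htrN, smul_eq_mul, inv_mul_cancel₀ (by positivity)]
      · intro z z' h; simp [Matrix.smul_apply, he z z' h]
    have hsumN : n * n ≤ ∑ z, ∑ z', N z z' := by
      have h0 := psd_entries_nonneg hNJ
      have h1 : ∑ z, ∑ z', ((N - Matrix.of fun _ _ => (1:ℝ)) : Matrix γ γ ℝ) z z'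
          = (∑ z, ∑ z', N z z') - n * n := by
        simp [Matrix.sub_apply, Finset.sum_sub_distrib, Finset.sum_const, Finset.card_univ,
          hn_def, mul_comm]
      rw [h1] at h0
      linarith
    have hval : n / t ≤ ∑ z, ∑ z', ((n*t)⁻¹ • N) z z' := by
      have h2 : ∑ z, ∑ z', ((n*t)⁻¹ • N) z z' = (n*t)⁻¹ * ∑ z, ∑ z', N z z' := by
        simp [Matrix.smul_apply, Finset.mul_sum]
      rw [h2]
      have h3 : (n*t)⁻¹ * (n*n) ≤ (n*t)⁻¹ * ∑ z, ∑ z', N z z' :=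
        mul_le_mul_of_nonneg_left hsumN hcpos.le
      have h4 : (n*t)⁻¹ * (n*n) = n / t := by
        field_simp
      linarith
    exact le_trans hval (le_csSup hS1_bdd hmem)
  have hineq : n ≤ sSup S1 * sInf S2 := by
    have h4 : ∀ t ∈ S2, n / sSup S1 ≤ t := by
      intro t ht
      have h5 := hpart1 t ht
      have htpos : 0 < t := lt_of_lt_of_le one_pos (hS2_lb t ht)
      rw [div_le_iff₀ htpos] at h5
      rw [div_le_iff₀ hθpos]
      linarith [mul_comm t (sSup S1)]
    have h6 : n / sSup S1 ≤ sInf S2 := le_csInf hS2_ne h4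
    rw [div_le_iff₀ hθpos] at h6
    linarith [mul_comm (sInf S2) (sSup S1)]
  refine ⟨by rw [hT, hB]; exact hineq, ?_⟩
  intro htrans
  have hS1_le : ∀ r ∈ S1, r ≤ n / sInf S2 := by
    rintro r ⟨M, hpsd, htrace, he, hrval⟩
    by_cases hrpos : 0 < r
    · obtain ⟨N, h1, h2, h3, h4⟩ := key_construct X htrans hpsd htrace he hrval hrpos
      have hmem2 : n / r ∈ S2 := ⟨N, h1, fun z => by rw [h2 z, hn_def], h3, h4⟩
      have h5 : sInf S2 ≤ n / r := csInf_le hS2_bdd hmem2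
      rw [le_div_iff₀ hbpos]
      rw [le_div_iff₀ hrpos] at h5
      linarith [mul_comm r (sInf S2)]
    · push_neg at hrpos
      have h7 : (0:ℝ) ≤ n / sInf S2 := by positivity
      linarith
  have hθle : sSup S1 ≤ n / sInf S2 := csSup_le hS1_ne hS1_le
  rw [le_div_iff₀ hbpos] at hθle
  rw [hT, hB]
  linarith
end

section
/- Let X and Y be finite simple graphs. Then ϑ(X[Y]) = ϑ(X)·ϑ(Y) = ϑ(X * Y), where for a graph Z, ϑ(Z) is the supremum of ∑_{z,z'} M_{z,z'} over real positive semidefinite matrices M indexed by V(Z) with tr(M) = 1 and M_{z,z'} = 0 whenever z is adjacent to z' in Z. -/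
open Matrix

/-- The lexicographic product `X[Y]`. -/
def lexProd {α β : Type*} (X : SimpleGraph α) (Y : SimpleGraph β) :
    SimpleGraph (α × β) where
  Adj p q := X.Adj p.1 q.1 ∨ (p.1 = q.1 ∧ Y.Adj p.2 q.2)
  symm := ⟨by
    rintro ⟨x, y⟩ ⟨x', y'⟩ (h | ⟨h1, h2⟩)
    · exact Or.inl h.symm
    · exact Or.inr ⟨h1.symm, h2.symm⟩⟩
  loopless := ⟨by rintro ⟨x, y⟩ (h | ⟨_, h⟩) <;> exact h.ne rfl⟩

/-- The disjunctive product `X * Y`. -/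
def disjProd {α β : Type*} (X : SimpleGraph α) (Y : SimpleGraph β) :
    SimpleGraph (α × β) where
  Adj p q := X.Adj p.1 q.1 ∨ Y.Adj p.2 q.2
  symm := ⟨by
    rintro ⟨x, y⟩ ⟨x', y'⟩ (h | h)
    · exact Or.inl h.symm
    · exact Or.inr h.symm⟩
  loopless := ⟨by rintro ⟨x, y⟩ (h | h) <;> exact h.ne rfl⟩

set_option linter.unusedSectionVars false
set_option linter.unusedVariables false

open Pointwise

namespace LovAux

section Basic

variable {γ : Type*} [Fintype γ]

/-- The quadratic form of a matrix. -/
def qf (M : Matrix γ γ ℝ) (v : γ → ℝ) : ℝ := ∑ i, ∑ j, v i * M i j * v j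

lemma dot_eq_qf (M : Matrix γ γ ℝ) (v : γ → ℝ) :
    dotProduct (star v) (M *ᵥ v) = qf M v := by
  simp only [dotProduct, mulVec, qf, Pi.star_apply, star_trivial, Finset.mul_sum]
  refine Finset.sum_congr rfl fun i _ => Finset.sum_congr rfl fun j _ => by ring

lemma qf_nonneg {M : Matrix γ γ ℝ} (hM : M.PosSemidef) (v : γ → ℝ) : 0 ≤ qf M v := by
  rw [← dot_eq_qf]; exact hM.dotProduct_mulVec_nonneg v

lemma posSemidef_of_qf {M : Matrix γ γ ℝ} (hH : M.IsHermitian) (h : ∀ v, 0 ≤ qf M v) :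
    M.PosSemidef := posSemidef_iff_dotProduct_mulVec.mpr ⟨hH, fun v => by rw [dot_eq_qf]; exact h v⟩

lemma entry_symm {M : Matrix γ γ ℝ} (hM : M.IsHermitian) (i j : γ) : M i j = M j i := by
  conv_lhs => rw [← hM]
  simp [conjTranspose_apply]

lemma posSemidef_smul {M : Matrix γ γ ℝ} (hM : M.PosSemidef) {c : ℝ} (hc : 0 ≤ c) :
    (c • M).PosSemidef := by
  refine posSemidef_of_qf ?_ ?_
  · show (c • M)ᴴ = c • M
    rw [Matrix.conjTranspose_smul, star_trivial, hM.1]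
  · intro v
    have : qf (c • M) v = c * qf M v := by
      simp only [qf, Matrix.smul_apply, smul_eq_mul, Finset.mul_sum]
      exact Finset.sum_congr rfl fun i _ => Finset.sum_congr rfl fun j _ => by ring
    rw [this]
    exact mul_nonneg hc (qf_nonneg hM v)

lemma qf_pair [DecidableEq γ] (M : Matrix γ γ ℝ) (i j : γ) (c : ℝ) :
    qf M (fun k => (if k = i then 1 else 0) + c * (if k = j then 1 else 0)) =
      M i i + c * (M i j + M j i) + c^2 * M j j := by
  unfold qf
  have : ∀ k l, ((if k = i then (1:ℝ) else 0) + c * (if k = j then 1 else 0)) * M k l *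
      ((if l = i then 1 else 0) + c * (if l = j then 1 else 0)) =
      (if k = i then 1 else 0) * M k l * (if l = i then 1 else 0)
      + c * ((if k = i then 1 else 0) * M k l * (if l = j then 1 else 0))
      + c * ((if k = j then 1 else 0) * M k l * (if l = i then 1 else 0))
      + c^2 * ((if k = j then 1 else 0) * M k l * (if l = j then 1 else 0)) := by
    intro k l; ring
  simp only [this, Finset.sum_add_distrib, ← Finset.mul_sum]
  have e1 : ∀ (a b : γ), ∑ k, ∑ l,
      (if k = a then (1:ℝ) else 0) * M k l * (if l = b then 1 else 0) = M a b := by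
    intro a b
    simp [Finset.sum_ite_eq', mul_comm]
  rw [e1 i i, e1 i j, e1 j i, e1 j j]
  ring

lemma diag_nonneg {M : Matrix γ γ ℝ} (hM : M.PosSemidef) (i : γ) : 0 ≤ M i i := by
  classical
  have := qf_nonneg hM (fun k => (if k = i then 1 else 0) + 0 * (if k = i then 1 else 0))
  rw [qf_pair] at this; linarith

lemma offdiag_bound {M : Matrix γ γ ℝ} (hM : M.PosSemidef) (i j : γ) (c : ℝ)
    (hc : c = 1 ∨ c = -1) :
    0 ≤ M i i + c * (M i j + M j i) + M j j := by
  classical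
  have := qf_nonneg hM (fun k => (if k = i then 1 else 0) + c * (if k = j then 1 else 0))
  rw [qf_pair] at this
  rcases hc with rfl | rfl <;> simpa using this

/-- `2 * |M i j| ≤ M i i + M j j` for PSD matrices. -/
lemma abs_entry_le {M : Matrix γ γ ℝ} (hM : M.PosSemidef) (i j : γ) :
    2 * |M i j| ≤ M i i + M j j := by
  have hs := entry_symm hM.1 i j
  have h1 := offdiag_bound hM i j 1 (Or.inl rfl)
  have h2 := offdiag_bound hM i j (-1) (Or.inr rfl)
  rcases abs_cases (M i j) with ⟨h, _⟩ | ⟨h, _⟩ <;> rw [h] <;> nlinarith [hs]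

/-- Sum of all entries. -/
def sumE (M : Matrix γ γ ℝ) : ℝ := ∑ i, ∑ j, M i j

/-- The feasible set of the theta SDP. -/
def Feas (Z : SimpleGraph γ) : Set (Matrix γ γ ℝ) :=
  {M | M.PosSemidef ∧ M.trace = 1 ∧ ∀ z z', Z.Adj z z' → M z z' = 0}

lemma lovTheta_eq (Z : SimpleGraph γ) : lovTheta Z = sSup (sumE '' Feas Z) := by
  unfold lovTheta
  congr 1
  ext r
  constructor
  · rintro ⟨M, h1, h2, h3, rfl⟩; exact ⟨M, ⟨h1, h2, h3⟩, rfl⟩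
  · rintro ⟨M, ⟨h1, h2, h3⟩, rfl⟩; exact ⟨M, h1, h2, h3, rfl⟩

lemma sumE_nonneg {M : Matrix γ γ ℝ} (hM : M.PosSemidef) : 0 ≤ sumE M := by
  have := qf_nonneg hM (fun _ => 1)
  simpa [qf, sumE] using this

lemma sumE_le_card {Z : SimpleGraph γ} {M : Matrix γ γ ℝ} (hM : M ∈ Feas Z) :
    sumE M ≤ (Fintype.card γ : ℝ) := by
  obtain ⟨h1, h2, _⟩ := hM
  have key : ∀ i j, M i j ≤ (M i i + M j j) / 2 := by
    intro i j
    have := abs_entry_le h1 i j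
    have := le_abs_self (M i j)
    linarith
  have h3 : ∑ i : γ, M i i = 1 := h2
  calc sumE M ≤ ∑ i, ∑ j, (M i i + M j j) / 2 :=
        Finset.sum_le_sum fun i _ => Finset.sum_le_sum fun j _ => key i j
    _ = (Fintype.card γ : ℝ) := by
        have e : ∀ i : γ, ∑ j : γ, (M i i + M j j)/2 = ((Fintype.card γ : ℝ) * M i i + 1)/2 := by
          intro i
          rw [← Finset.sum_div, Finset.sum_add_distrib, Finset.sum_const, h3]
          simp [nsmul_eq_mul]
        rw [Finset.sum_congr rfl (fun i _ => e i), ← Finset.sum_div, Finset.sum_add_distrib,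
          ← Finset.mul_sum, h3, Finset.sum_const, nsmul_eq_mul, Finset.card_univ]
        ring

lemma bddAbove_theta (Z : SimpleGraph γ) : BddAbove (sumE '' Feas Z) := by
  refine ⟨(Fintype.card γ : ℝ), ?_⟩
  rintro r ⟨M, hM, rfl⟩
  exact sumE_le_card hM

lemma le_lovTheta {Z : SimpleGraph γ} {M : Matrix γ γ ℝ} (hM : M ∈ Feas Z) :
    sumE M ≤ lovTheta Z := by
  rw [lovTheta_eq]
  exact le_csSup (bddAbove_theta Z) ⟨M, hM, rfl⟩

lemma lovTheta_nonneg (Z : SimpleGraph γ) : 0 ≤ lovTheta Z := by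
  rcases Set.eq_empty_or_nonempty (Feas Z) with h | ⟨M, hM⟩
  · rw [lovTheta_eq, h]
    simp [Real.sSup_empty]
  · exact le_trans (sumE_nonneg hM.1) (le_lovTheta hM)

lemma feas_id [DecidableEq γ] [Nonempty γ] (Z : SimpleGraph γ) :
    ((Fintype.card γ : ℝ)⁻¹ • (1 : Matrix γ γ ℝ)) ∈ Feas Z := by
  have hn : (0:ℝ) < (Fintype.card γ : ℝ) := by
    exact_mod_cast Fintype.card_pos
  refine ⟨posSemidef_smul Matrix.PosSemidef.one (by positivity), ?_, ?_⟩
  · simp [Matrix.trace, Matrix.diag, Finset.sum_const, hn.ne']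
  · intro z z' hadj
    have : z ≠ z' := hadj.ne
    simp [Matrix.one_apply, this]

lemma feas_nonempty [Nonempty γ] (Z : SimpleGraph γ) : (sumE '' Feas Z).Nonempty := by
  classical
  exact ⟨_, _, feas_id Z, rfl⟩

lemma lovTheta_empty (h : IsEmpty γ) (Z : SimpleGraph γ) : lovTheta Z = 0 := by
  rw [lovTheta_eq]
  have : Feas Z = ∅ := by
    ext M
    simp only [Feas, Set.mem_setOf_eq, Set.mem_empty_iff_false, iff_false]
    rintro ⟨_, h2, _⟩
    rw [Matrix.trace] at h2
    simp [Matrix.diag] at h2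
  rw [this]
  simp [Real.sSup_empty]

end Basic

section Kron

variable {ι₁ ι₂ ι : Type*} [Fintype ι₁] [Fintype ι₂] [Fintype ι]

lemma posSemidef_kron {S : Matrix ι₁ ι₁ ℝ} {T : Matrix ι₂ ι₂ ℝ}
    (hS : S.PosSemidef) (hT : T.PosSemidef) :
    (Matrix.of fun (p q : ι₁ × ι₂) => S p.1 q.1 * T p.2 q.2).PosSemidef := by
  obtain ⟨B, rfl⟩ : ∃ B : Matrix ι₁ ι₁ ℝ, S = Bᴴ * B := by
    classical
    open scoped MatrixOrder Matrix.Norms.L2Operator in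
    exact CStarAlgebra.nonneg_iff_eq_star_mul_self.mp hS.nonneg
  obtain ⟨C, rfl⟩ : ∃ B : Matrix ι₂ ι₂ ℝ, T = Bᴴ * B := by
    classical
    open scoped MatrixOrder Matrix.Norms.L2Operator in
    exact CStarAlgebra.nonneg_iff_eq_star_mul_self.mp hT.nonneg
  have key : (Matrix.of fun (p q : ι₁ × ι₂) => (Bᴴ * B) p.1 q.1 * (Cᴴ * C) p.2 q.2)
      = (Matrix.of fun (k p : ι₁ × ι₂) => B k.1 p.1 * C k.2 p.2)ᴴ *
        (Matrix.of fun (k p : ι₁ × ι₂) => B k.1 p.1 * C k.2 p.2) := by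
    ext p q
    simp only [Matrix.mul_apply, Matrix.conjTranspose_apply, Matrix.of_apply, star_trivial,
      Fintype.sum_prod_type, RCLike.star_def, RCLike.conj_to_real]
    rw [Finset.sum_mul_sum]
    refine Finset.sum_congr rfl fun k1 _ => Finset.sum_congr rfl fun k2 _ => by ring
  rw [key]
  exact posSemidef_conjTranspose_mul_self _

lemma inner_psd_nonneg {S T : Matrix ι ι ℝ} (hS : S.PosSemidef) (hT : T.PosSemidef) :
    0 ≤ ∑ p, ∑ q, S p q * T p q := by
  obtain ⟨B, rfl⟩ : ∃ B : Matrix ι ι ℝ, S = Bᴴ * B := by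
    classical
    open scoped MatrixOrder Matrix.Norms.L2Operator in
    exact CStarAlgebra.nonneg_iff_eq_star_mul_self.mp hS.nonneg
  have e1 : ∀ p q, (Bᴴ * B) p q * T p q = ∑ k, B k p * T p q * B k q := by
    intro p q
    rw [Matrix.mul_apply, Finset.sum_mul]
    exact Finset.sum_congr rfl fun k _ => by
      simp only [Matrix.conjTranspose_apply, RCLike.star_def, RCLike.conj_to_real]
      ring
  calc ∑ p, ∑ q, (Bᴴ * B) p q * T p q
      = ∑ p, ∑ k, ∑ q, B k p * T p q * B k q := by
        refine Finset.sum_congr rfl fun p _ => ?_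
        rw [← Finset.sum_comm]
        exact Finset.sum_congr rfl fun q _ => e1 p q
    _ = ∑ k, qf T (fun p => B k p) := by
        rw [Finset.sum_comm]
        rfl
    _ ≥ 0 := Finset.sum_nonneg fun k _ => qf_nonneg hT _

lemma posSemidef_allOnes : (Matrix.of fun _ _ : ι => (1:ℝ)).PosSemidef := by
  refine posSemidef_of_qf ?_ ?_
  · ext i j; simp [Matrix.conjTranspose_apply]
  · intro v
    have : qf (Matrix.of fun _ _ : ι => (1:ℝ)) v = (∑ i, v i) * (∑ j, v j) := by
      rw [Finset.sum_mul_sum]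
      exact Finset.sum_congr rfl fun i _ => Finset.sum_congr rfl fun j _ => by simp
    rw [this, ← sq]
    positivity

end Kron

section Products

variable {α β : Type*} [Fintype α] [Fintype β]

lemma tensor_feas {X : SimpleGraph α} {Y : SimpleGraph β} {M : Matrix α α ℝ} {M' : Matrix β β ℝ}
    (hM : M ∈ Feas X) (hM' : M' ∈ Feas Y) :
    (Matrix.of fun (p q : α × β) => M p.1 q.1 * M' p.2 q.2) ∈ Feas (disjProd X Y) ∧
    sumE (Matrix.of fun (p q : α × β) => M p.1 q.1 * M' p.2 q.2) = sumE M * sumE M' := by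
  obtain ⟨h1, h2, h3⟩ := hM
  obtain ⟨h1', h2', h3'⟩ := hM'
  refine ⟨⟨posSemidef_kron h1 h1', ?_, ?_⟩, ?_⟩
  · change (∑ p : α × β, M p.1 p.1 * M' p.2 p.2) = 1
    have e : (∑ p : α × β, M p.1 p.1 * M' p.2 p.2) = ∑ x : α, ∑ y : β, M x x * M' y y := by
      rw [Fintype.sum_prod_type]
    rw [e, ← Finset.sum_mul_sum]
    have e2 : ∑ x, M x x = 1 := h2
    have e2' : ∑ y, M' y y = 1 := h2'
    rw [e2, e2', one_mul]
  · rintro ⟨x, y⟩ ⟨x', y'⟩ (h | h)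
    · simp only [Matrix.of_apply]
      rw [h3 _ _ h, zero_mul]
    · simp only [Matrix.of_apply]
      rw [h3' _ _ h, mul_zero]
  · show (∑ p : α × β, ∑ q : α × β, M p.1 q.1 * M' p.2 q.2) = sumE M * sumE M'
    unfold sumE
    have e : (∑ p : α × β, ∑ q : α × β, M p.1 q.1 * M' p.2 q.2)
        = ∑ x : α, ∑ y : β, ∑ x' : α, ∑ y' : β, M x x' * M' y y' := by
      simp only [Fintype.sum_prod_type]
    rw [e, Finset.sum_mul_sum]
    refine Finset.sum_congr rfl fun x _ => Finset.sum_congr rfl fun y _ => ?_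
    rw [Finset.sum_mul_sum]

lemma lex_feas_of_disj {X : SimpleGraph α} {Y : SimpleGraph β} :
    Feas (disjProd X Y) ⊆ Feas (lexProd X Y) := by
  rintro M ⟨h1, h2, h3⟩
  refine ⟨h1, h2, fun p q h => h3 p q ?_⟩
  rcases h with h | ⟨_, h⟩
  · exact Or.inl h
  · exact Or.inr h

lemma disj_le_lex (X : SimpleGraph α) (Y : SimpleGraph β) [Nonempty α] [Nonempty β] :
    lovTheta (disjProd X Y) ≤ lovTheta (lexProd X Y) := by
  rw [lovTheta_eq, lovTheta_eq]
  have : Nonempty (α × β) := inferInstance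
  exact csSup_le_csSup (bddAbove_theta _) (feas_nonempty _)
    (Set.image_mono lex_feas_of_disj)

lemma mul_le_disj (X : SimpleGraph α) (Y : SimpleGraph β) [Nonempty α] [Nonempty β] :
    lovTheta X * lovTheta Y ≤ lovTheta (disjProd X Y) := by
  set D := lovTheta (disjProd X Y) with hD
  have hD0 : 0 ≤ D := lovTheta_nonneg _
  have step1 : ∀ a ∈ sumE '' Feas X, ∀ b ∈ sumE '' Feas Y, a * b ≤ D := by
    rintro _ ⟨M, hM, rfl⟩ _ ⟨M', hM', rfl⟩
    obtain ⟨hfeas, hsum⟩ := tensor_feas hM hM'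
    rw [← hsum]
    exact le_lovTheta hfeas
  have step2 : ∀ a ∈ sumE '' Feas X, a * lovTheta Y ≤ D := by
    rintro a ha
    obtain ⟨M, hM, rfl⟩ := ha
    have ha0 : 0 ≤ sumE M := sumE_nonneg hM.1
    rcases eq_or_lt_of_le ha0 with h0 | h0
    · rw [← h0, zero_mul]; exact hD0
    · have : lovTheta Y ≤ D / sumE M := by
        rw [lovTheta_eq]
        refine csSup_le (feas_nonempty Y) ?_
        intro b hb
        rw [le_div_iff₀ h0, mul_comm]
        exact step1 _ ⟨M, hM, rfl⟩ _ hb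
      calc sumE M * lovTheta Y ≤ sumE M * (D / sumE M) :=
            mul_le_mul_of_nonneg_left this ha0
        _ = D := by field_simp
  have hY0 : 0 ≤ lovTheta Y := lovTheta_nonneg _
  rcases eq_or_lt_of_le hY0 with h0 | h0
  · rw [← h0, mul_zero]; exact hD0
  · have : lovTheta X ≤ D / lovTheta Y := by
      rw [lovTheta_eq]
      refine csSup_le (feas_nonempty X) ?_
      intro a ha
      rw [le_div_iff₀ h0]
      exact step2 _ ha
    calc lovTheta X * lovTheta Y ≤ (D / lovTheta Y) * lovTheta Y :=
          mul_le_mul_of_nonneg_right this hY0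
      _ = D := by field_simp

end Products

section Separation

variable {γ : Type*} [Fintype γ]

/-- quadratic form on raw functions -/
def qfE (x : γ → γ → ℝ) (v : γ → ℝ) : ℝ := ∑ i, ∑ j, v i * x i j * v j

def Cpos (γ : Type*) [Fintype γ] : Set (γ → γ → ℝ) := {x | ∀ v : γ → ℝ, 0 ≤ qfE x v}
def Vedge (Z : SimpleGraph γ) : Set (γ → γ → ℝ) := {x | ∀ i j, ¬ Z.Adj i j → x i j = 0}
def SGood (Z : SimpleGraph γ) : Set (γ → γ → ℝ) := Cpos γ + Vedge Z

lemma qfE_add (x y : γ → γ → ℝ) (v : γ → ℝ) : qfE (x + y) v = qfE x v + qfE y v := by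
  unfold qfE
  rw [← Finset.sum_add_distrib]
  refine Finset.sum_congr rfl fun i _ => ?_
  rw [← Finset.sum_add_distrib]
  exact Finset.sum_congr rfl fun j _ => by simp [Pi.add_apply]; ring

lemma qfE_smul (c : ℝ) (x : γ → γ → ℝ) (v : γ → ℝ) : qfE (c • x) v = c * qfE x v := by
  unfold qfE
  rw [Finset.mul_sum]
  refine Finset.sum_congr rfl fun i _ => ?_
  rw [Finset.mul_sum]
  exact Finset.sum_congr rfl fun j _ => by simp [Pi.smul_apply, smul_eq_mul]; ring

lemma zero_mem_Cpos : (0 : γ → γ → ℝ) ∈ Cpos γ := fun v => by simp [qfE]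

lemma zero_mem_Vedge (Z : SimpleGraph γ) : (0 : γ → γ → ℝ) ∈ Vedge Z := fun i j _ => rfl

lemma convex_Cpos : Convex ℝ (Cpos γ) := by
  intro x hx y hy a b ha hb _
  intro v
  rw [qfE_add, qfE_smul, qfE_smul]
  have := hx v; have := hy v
  positivity

lemma convex_Vedge (Z : SimpleGraph γ) : Convex ℝ (Vedge Z) := by
  intro x hx y hy a b _ _ _
  intro i j hij
  simp [Pi.add_apply, Pi.smul_apply, hx i j hij, hy i j hij]

lemma convex_SGood (Z : SimpleGraph γ) : Convex ℝ (SGood Z) :=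
  convex_Cpos.add (convex_Vedge Z)

lemma zero_mem_SGood (Z : SimpleGraph γ) : (0 : γ → γ → ℝ) ∈ SGood Z :=
  ⟨0, zero_mem_Cpos, 0, zero_mem_Vedge Z, by simp⟩

lemma Cpos_subset_SGood (Z : SimpleGraph γ) : Cpos γ ⊆ SGood Z :=
  fun p hp => ⟨p, hp, 0, zero_mem_Vedge Z, by simp⟩

lemma Vedge_subset_SGood (Z : SimpleGraph γ) : Vedge Z ⊆ SGood Z :=
  fun w hw => ⟨0, zero_mem_Cpos, w, hw, by simp⟩

lemma smul_mem_SGood {Z : SimpleGraph γ} {c : ℝ} (hc : 0 ≤ c) {x : γ → γ → ℝ}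
    (hx : x ∈ SGood Z) : c • x ∈ SGood Z := by
  obtain ⟨p, hp, w, hw, rfl⟩ := hx
  refine ⟨c • p, fun v => ?_, c • w, fun i j hij => ?_, (smul_add c p w).symm⟩
  · rw [qfE_smul]; exact mul_nonneg hc (hp v)
  · simp [Pi.smul_apply, hw i j hij]

lemma dual_pairing_nonneg (Z : SimpleGraph γ) {M : Matrix γ γ ℝ}
    (hP : M.PosSemidef) (hE : ∀ i j, Z.Adj i j → M i j = 0) :
    0 ≤ lovTheta Z * (∑ i, M i i) - sumE M := by
  have hd : 0 ≤ ∑ i, M i i := Finset.sum_nonneg fun i _ => diag_nonneg hP i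
  rcases eq_or_lt_of_le hd with h0 | hpos
  · have hdiag : ∀ i, M i i = 0 := by
      have := (Finset.sum_eq_zero_iff_of_nonneg (fun i _ => diag_nonneg hP i)).mp h0.symm
      exact fun i => this i (Finset.mem_univ i)
    have hall : ∀ i j, M i j = 0 := by
      intro i j
      have h1 := abs_entry_le hP i j
      have h2 := abs_nonneg (M i j)
      rw [hdiag i, hdiag j] at h1
      exact abs_eq_zero.mp (le_antisymm (by linarith) h2)
    have hs : sumE M = 0 := by simp [sumE, hall]
    rw [hs, ← h0]
    simp
  · set a := ∑ i, M i i with ha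
    have hfeas : (a⁻¹ • M) ∈ Feas Z := by
      refine ⟨posSemidef_smul hP (inv_nonneg.mpr hd), ?_, ?_⟩
      · have htr : M.trace = a := rfl
        rw [Matrix.trace_smul, htr, smul_eq_mul, inv_mul_cancel₀ (ne_of_gt hpos)]
      · intro z z' h
        simp [Matrix.smul_apply, hE z z' h]
    have hle := le_lovTheta hfeas
    have hse : sumE (a⁻¹ • M) = a⁻¹ * sumE M := by
      simp [sumE, Matrix.smul_apply, Finset.mul_sum]
    rw [hse] at hle
    have hcan : a * (a⁻¹ * sumE M) = sumE M := by
      field_simp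
    have := mul_le_mul_of_nonneg_left hle hd
    rw [hcan] at this
    nlinarith

variable [DecidableEq γ]

/-- basis elements -/
def eE (i j : γ) : γ → γ → ℝ := fun k l => if i = k ∧ j = l then 1 else 0

lemma f_decomp (f : (γ → γ → ℝ) →L[ℝ] ℝ) (x : γ → γ → ℝ) :
    f x = ∑ i, ∑ j, x i j * f (eE i j) := by
  have hx : x = ∑ i, ∑ j, x i j • eE i j := by
    funext k l
    simp only [Finset.sum_apply, Pi.smul_apply, eE, smul_eq_mul, mul_ite, mul_one, mul_zero,
      ite_and]
    rw [Finset.sum_comm]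
    simp [Finset.sum_ite_eq]
  conv_lhs => rw [hx]
  rw [map_sum]
  refine Finset.sum_congr rfl fun i _ => ?_
  rw [map_sum]
  exact Finset.sum_congr rfl fun j _ => by rw [_root_.map_smul]; simp [smul_eq_mul]

lemma eE_mem_Vedge {Z : SimpleGraph γ} {i j : γ} (h : Z.Adj i j) : eE i j ∈ Vedge Z := by
  intro k l hkl
  unfold eE
  split_ifs with hc
  · obtain ⟨rfl, rfl⟩ := hc
    exact absurd h hkl
  · rfl

lemma neg_eE_mem_Vedge {Z : SimpleGraph γ} {i j : γ} (h : Z.Adj i j) : -eE i j ∈ Vedge Z := by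
  intro k l hkl
  simp [eE_mem_Vedge h k l hkl]

lemma vvT_mem_Cpos (v : γ → ℝ) : (fun k l => v k * v l) ∈ Cpos γ := by
  intro w
  unfold qfE
  have e : ∀ i j, w i * (v i * v j) * w j = (w i * v i) * (v j * w j) := fun i j => by ring
  calc (0:ℝ) ≤ (∑ i, w i * v i) * (∑ j, v j * w j) := by
        have : ∑ j, v j * w j = ∑ i, w i * v i := Finset.sum_congr rfl fun i _ => by ring
        rw [this, ← sq]; positivity
    _ = ∑ i, ∑ j, w i * (v i * v j) * w j := by
        rw [Finset.sum_mul_sum]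
        exact Finset.sum_congr rfl fun i _ => Finset.sum_congr rfl fun j _ => (e i j).symm

theorem A_mem_closure (Z : SimpleGraph γ) :
    (fun i j => lovTheta Z * (if i = j then (1:ℝ) else 0) - 1) ∈ closure (SGood Z) := by
  set A : γ → γ → ℝ := fun i j => lovTheta Z * (if i = j then (1:ℝ) else 0) - 1 with hA
  by_contra hnot
  obtain ⟨f, u, hfA, hfs⟩ :=
    geometric_hahn_banach_point_closed (convex_SGood Z).closure isClosed_closure hnot
  have hu : u < 0 := by
    have := hfs 0 (subset_closure (zero_mem_SGood Z))
    simpa using this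
  have hnn : ∀ y ∈ SGood Z, 0 ≤ f y := by
    intro y hy
    by_contra hneg
    push_neg at hneg
    have hc : 0 < (2 * u) / f y := div_pos_of_neg_of_neg (by linarith) hneg
    have h2 := hfs _ (subset_closure (smul_mem_SGood hc.le hy))
    rw [_root_.map_smul, smul_eq_mul, div_mul_cancel₀ _ (ne_of_lt hneg)] at h2
    linarith
  set B : γ → γ → ℝ := fun i j => f (eE i j) with hB
  have hBedge : ∀ i j, Z.Adj i j → B i j = 0 := by
    intro i j h
    have h1 := hnn _ (Vedge_subset_SGood Z (eE_mem_Vedge h))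
    have h2 := hnn _ (Vedge_subset_SGood Z (neg_eE_mem_Vedge h))
    rw [map_neg] at h2
    simp only [hB]
    linarith
  set M : Matrix γ γ ℝ := Matrix.of fun i j => (B i j + B j i) / 2 with hM
  have swapB : ∀ v : γ → ℝ, (∑ i, ∑ j, v i * B j i * v j) = ∑ i, ∑ j, v i * B i j * v j := by
    intro v
    rw [Finset.sum_comm]
    exact Finset.sum_congr rfl fun i _ => Finset.sum_congr rfl fun j _ => by ring
  have hMpsd : M.PosSemidef := by
    refine posSemidef_of_qf ?_ ?_
    · ext i j
      simp only [Matrix.conjTranspose_apply, Matrix.of_apply, star_trivial, hM]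
      ring
    · intro v
      have e1 : qf M v = ∑ i, ∑ j, v i * B i j * v j := by
        unfold qf
        have : ∀ i j, v i * M i j * v j
            = (v i * B i j * v j) / 2 + (v i * B j i * v j) / 2 := by
          intro i j; simp only [hM, Matrix.of_apply]; ring
        simp only [this, Finset.sum_add_distrib, ← Finset.sum_div]
        rw [swapB]
        ring
      rw [e1]
      have hform := hnn _ (Cpos_subset_SGood Z (vvT_mem_Cpos v))
      rw [f_decomp] at hform
      calc (0:ℝ) ≤ ∑ i, ∑ j, (fun k l => v k * v l) i j * f (eE i j) := hform
        _ = ∑ i, ∑ j, v i * B i j * v j :=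
            Finset.sum_congr rfl fun i _ => Finset.sum_congr rfl fun j _ => by
              simp only [hB]; ring
  have hMedge : ∀ i j, Z.Adj i j → M i j = 0 := by
    intro i j h
    simp only [hM, Matrix.of_apply, hBedge i j h, hBedge j i h.symm]
    norm_num
  have hdual := dual_pairing_nonneg Z hMpsd hMedge
  have hAsymm : ∀ i j, A j i = A i j := by
    intro i j
    simp only [hA]
    congr 2
    simp [eq_comm]
  have hfA2 : f A = ∑ i, ∑ j, A i j * M i j := by
    rw [f_decomp]
    have swapAB : (∑ i, ∑ j, A i j * B j i) = ∑ i, ∑ j, A i j * B i j := by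
      rw [Finset.sum_comm]
      refine Finset.sum_congr rfl fun i _ => Finset.sum_congr rfl fun j _ => by
        rw [hAsymm i j]
    have : ∀ i j, A i j * M i j = (A i j * B i j) / 2 + (A i j * B j i) / 2 := by
      intro i j; simp only [hM, Matrix.of_apply]; ring
    simp only [this, Finset.sum_add_distrib, ← Finset.sum_div]
    rw [swapAB]
    have : ∀ i j, A i j * f (eE i j) = A i j * B i j := fun i j => rfl
    simp only [this]
    ring
  have hpair : ∑ i, ∑ j, A i j * M i j = lovTheta Z * (∑ i, M i i) - sumE M := by
    have : ∀ i j, A i j * M i j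
        = lovTheta Z * ((if i = j then (1:ℝ) else 0) * M i j) - M i j := by
      intro i j; simp only [hA]; ring
    simp only [this, Finset.sum_sub_distrib, ← Finset.mul_sum]
    unfold sumE
    congr 1
    congr 1
    refine Finset.sum_congr rfl fun i _ => ?_
    simp [Finset.sum_ite_eq]
  have : 0 ≤ f A := by rw [hfA2, hpair]; exact hdual
  linarith

end Separation

section Interior

variable {γ : Type*} [Fintype γ]

lemma sum_sq_pair (δ : ℝ) (v : γ → ℝ) :
    ∑ i, ∑ j, δ * ((v i)^2 + (v j)^2) / 2 = δ * (Fintype.card γ : ℝ) * ∑ i, (v i)^2 := by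
  have e : ∀ i : γ, ∑ j : γ, δ * ((v i)^2 + (v j)^2) / 2
      = δ * ((Fintype.card γ : ℝ) * (v i)^2 + ∑ j, (v j)^2) / 2 := by
    intro i
    rw [← Finset.sum_div, ← Finset.mul_sum, Finset.sum_add_distrib, Finset.sum_const,
      nsmul_eq_mul, Finset.card_univ]
  rw [Finset.sum_congr rfl fun i _ => e i, ← Finset.sum_div, ← Finset.mul_sum,
    Finset.sum_add_distrib, ← Finset.mul_sum, Finset.sum_const, nsmul_eq_mul, Finset.card_univ]
  ring

lemma idE_mem_interior [DecidableEq γ] (Z : SimpleGraph γ) :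
    (fun i j => if i = j then (1:ℝ) else 0) ∈ interior (SGood Z) := by
  set n : ℝ := (Fintype.card γ : ℝ) with hn
  have hn0 : 0 ≤ n := by positivity
  set δ : ℝ := 1 / (n + 1) with hδ
  have hδ0 : 0 < δ := by positivity
  set Id : γ → γ → ℝ := fun i j => if i = j then (1:ℝ) else 0 with hId
  refine mem_interior.mpr ⟨Metric.ball Id δ, ?_, Metric.isOpen_ball, Metric.mem_ball_self hδ0⟩
  intro x hx
  refine Cpos_subset_SGood Z ?_
  intro v
  have hent : ∀ i j, |x i j - Id i j| ≤ δ := by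
    intro i j
    have h1 : dist (x i j) (Id i j) ≤ dist (x i) (Id i) := dist_le_pi_dist (x i) (Id i) j
    have h2 : dist (x i) (Id i) ≤ dist x Id := dist_le_pi_dist x Id i
    have h3 : dist x Id ≤ δ := le_of_lt (Metric.mem_ball.mp hx)
    rw [Real.dist_eq] at h1
    linarith
  have hterm : ∀ i j, v i * (x i j - Id i j) * v j ≥ -(δ * ((v i)^2 + (v j)^2) / 2) := by
    intro i j
    have habs : |v i * (x i j - Id i j) * v j| ≤ δ * ((v i)^2 + (v j)^2) / 2 := by
      rw [abs_mul, abs_mul]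
      have h1 : |v i| * |x i j - Id i j| * |v j| ≤ |v i| * δ * |v j| := by
        have := hent i j
        have h2 : |v i| * |x i j - Id i j| ≤ |v i| * δ :=
          mul_le_mul_of_nonneg_left this (abs_nonneg _)
        exact mul_le_mul_of_nonneg_right h2 (abs_nonneg _)
      have h3 : |v i| * δ * |v j| = δ * (|v i| * |v j|) := by ring
      have h4 : |v i| * |v j| ≤ ((v i)^2 + (v j)^2) / 2 := by
        nlinarith [sq_nonneg (|v i| - |v j|), sq_abs (v i), sq_abs (v j)]
      calc |v i| * |x i j - Id i j| * |v j| ≤ δ * (|v i| * |v j|) := by rw [← h3]; exact h1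
        _ ≤ δ * (((v i)^2 + (v j)^2) / 2) := mul_le_mul_of_nonneg_left h4 hδ0.le
        _ = δ * ((v i)^2 + (v j)^2) / 2 := by ring
    have := neg_abs_le (v i * (x i j - Id i j) * v j)
    linarith
  have hqid : qfE Id v = ∑ i, (v i)^2 := by
    unfold qfE
    refine Finset.sum_congr rfl fun i _ => ?_
    simp only [hId, mul_ite, ite_mul, mul_one, mul_zero, zero_mul]
    rw [Finset.sum_ite_eq (Finset.univ) i (fun j => v i * v j)]
    simp [sq]
  have hsplit : qfE x v = qfE Id v + ∑ i, ∑ j, v i * (x i j - Id i j) * v j := by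
    unfold qfE
    rw [← Finset.sum_add_distrib]
    refine Finset.sum_congr rfl fun i _ => ?_
    rw [← Finset.sum_add_distrib]
    exact Finset.sum_congr rfl fun j _ => by ring
  have hlow : ∑ i, ∑ j, v i * (x i j - Id i j) * v j ≥ -(δ * n * ∑ i, (v i)^2) := by
    have h1 : ∑ i, ∑ j, v i * (x i j - Id i j) * v j
        ≥ ∑ i, ∑ j, -(δ * ((v i)^2 + (v j)^2) / 2) :=
      Finset.sum_le_sum fun i _ => Finset.sum_le_sum fun j _ => hterm i j
    have h2 : ∑ i, ∑ j, -(δ * ((v i)^2 + (v j)^2) / 2) = -(δ * n * ∑ i, (v i)^2) := by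
      simp only [Finset.sum_neg_distrib]
      rw [sum_sq_pair δ v]
    linarith [h1, h2.ge, h2.le]
  have hδn : δ * n ≤ 1 := by
    rw [hδ]
    rw [div_mul_eq_mul_div, one_mul, div_le_one (by positivity)]
    linarith
  have hsq : 0 ≤ ∑ i, (v i)^2 := Finset.sum_nonneg fun i _ => sq_nonneg _
  rw [hsplit, hqid]
  nlinarith

lemma qf_symmetrize (x : γ → γ → ℝ) (v : γ → ℝ) :
    qf (Matrix.of fun i j => (x i j + x j i) / 2) v = qfE x v := by
  unfold qf qfE
  have swapx : (∑ i, ∑ j, v i * x j i * v j) = ∑ i, ∑ j, v i * x i j * v j := by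
    rw [Finset.sum_comm]
    exact Finset.sum_congr rfl fun i _ => Finset.sum_congr rfl fun j _ => by ring
  have e : ∀ i j, v i * ((x i j + x j i) / 2) * v j
      = (v i * x i j * v j) / 2 + (v i * x j i * v j) / 2 := fun i j => by ring
  simp only [Matrix.of_apply, e, Finset.sum_add_distrib, ← Finset.sum_div]
  rw [swapx]
  ring

lemma exists_dual [DecidableEq γ] (Z : SimpleGraph γ) {ε : ℝ} (hε : 0 < ε) :
    ∃ N : Matrix γ γ ℝ, (∀ i, N i i = lovTheta Z + ε) ∧
      (∀ i j, i ≠ j → ¬ Z.Adj i j → N i j = 0) ∧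
      (N - Matrix.of fun _ _ => (1:ℝ)).PosSemidef := by
  set Idf : γ → γ → ℝ := fun i j => if i = j then (1:ℝ) else 0 with hId
  set A : γ → γ → ℝ := fun i j => lovTheta Z * Idf i j - 1 with hA
  have hcl : A ∈ closure (SGood Z) := A_mem_closure Z
  have hint : Idf ∈ interior (SGood Z) := idE_mem_interior Z
  set t : ℝ := ε / (1 + ε) with ht
  have hεp : (0:ℝ) < 1 + ε := by linarith
  have htmem : t ∈ Set.Ioc (0:ℝ) 1 := by
    constructor
    · positivity
    · rw [ht, div_le_one hεp]; linarith
  have hmem := (convex_SGood Z).add_smul_sub_mem_interior' hcl hint htmem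
  have hmem' : A + t • (Idf - A) ∈ SGood Z := interior_subset hmem
  have h1t : 0 < 1 - t := by
    have : t < 1 := by rw [ht, div_lt_one hεp]; linarith
    linarith
  have hsc := smul_mem_SGood (inv_nonneg.mpr h1t.le) hmem'
  have key : ∀ a b : ℝ, (1 - t)⁻¹ * (a + t * (b - a)) = a + ε * b := by
    intro a b
    rw [ht]
    have h2 : (1:ℝ) - ε / (1 + ε) = 1 / (1 + ε) := by field_simp; ring
    rw [h2]
    field_simp
    ring
  have heq : (1 - t)⁻¹ • (A + t • (Idf - A)) = A + ε • Idf := by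
    funext i j
    simp only [Pi.smul_apply, Pi.add_apply, Pi.sub_apply, smul_eq_mul]
    exact key (A i j) (Idf i j)
  rw [heq] at hsc
  obtain ⟨p, hp, w, hw, hde⟩ := hsc
  have hde' : ∀ i j, p i j + w i j = A i j + ε * Idf i j := by
    intro i j
    have := congrFun (congrFun hde i) j
    simpa using this
  refine ⟨Matrix.of fun i j => (lovTheta Z + ε) * Idf i j - (w i j + w j i) / 2, ?_, ?_, ?_⟩
  · intro i
    have hwii : w i i = 0 := hw i i (Z.irrefl)
    simp [hId, hwii]
  · intro i j hij hadj
    have hw1 : w i j = 0 := hw i j hadj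
    have hw2 : w j i = 0 := hw j i (fun h => hadj h.symm)
    simp [hId, hij, hw1, hw2]
  · have hNJ : (Matrix.of fun i j => (lovTheta Z + ε) * Idf i j - (w i j + w j i) / 2)
        - (Matrix.of fun _ _ => (1:ℝ)) = Matrix.of fun i j => (p i j + p j i) / 2 := by
      ext i j
      have hIdsymm : Idf j i = Idf i j := by simp [hId, eq_comm]
      have h1 : p i j + w i j = lovTheta Z * Idf i j - 1 + ε * Idf i j := by
        have h := hde' i j; simp only [hA] at h; exact h
      have h2 : p j i + w j i = lovTheta Z * Idf i j - 1 + ε * Idf i j := by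
        have h := hde' j i; simp only [hA, hIdsymm] at h; exact h
      simp only [Matrix.sub_apply, Matrix.of_apply]
      linarith
    rw [hNJ]
    refine posSemidef_of_qf ?_ ?_
    · ext i j
      simp only [Matrix.conjTranspose_apply, Matrix.of_apply, star_trivial]
      ring
    · intro v
      rw [qf_symmetrize]
      exact hp v

end Interior

section LexBound

variable {α β : Type*} [Fintype α] [Fintype β]

lemma core_bound [DecidableEq α] (X : SimpleGraph α) (Y : SimpleGraph β)
    {M : Matrix (α × β) (α × β) ℝ} (hM : M ∈ Feas (lexProd X Y)) {ε : ℝ} (hε : 0 < ε) :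
    sumE M ≤ (lovTheta X + ε) * lovTheta Y := by
  obtain ⟨hMp, hMt, hMe⟩ := hM
  obtain ⟨N, hNd, hNo, hNJ⟩ := exists_dual X hε
  set Q : Matrix β β ℝ := Matrix.of fun y y' => ∑ x, M (x, y) (x, y') with hQ
  have hQfeas : Q ∈ Feas Y := by
    refine ⟨posSemidef_of_qf ?_ ?_, ?_, ?_⟩
    · ext y y'
      simp only [Matrix.conjTranspose_apply, Matrix.of_apply, star_trivial, hQ]
      exact Finset.sum_congr rfl fun x _ => entry_symm hMp.1 _ _
    · intro w
      have hvx : ∀ x : α, 0 ≤ qf M (fun p => if p.1 = x then w p.2 else 0) :=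
        fun x => qf_nonneg hMp _
      have hqx : ∀ x : α, qf M (fun p => if p.1 = x then w p.2 else 0)
          = ∑ y, ∑ y', w y * M (x, y) (x, y') * w y' := by
        intro x
        unfold qf
        have e : (∑ p : α × β, ∑ q : α × β,
            (if p.1 = x then w p.2 else 0) * M p q * (if q.1 = x then w q.2 else 0))
            = ∑ x1, ∑ y, ∑ x2, ∑ y', (if x1 = x then w y else 0) * M (x1,y) (x2,y')
              * (if x2 = x then w y' else 0) := by
          simp only [Fintype.sum_prod_type]
        rw [e]
        have e2 : ∀ x1 y x2 y', (if x1 = x then w y else 0) * M (x1,y) (x2,y')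
            * (if x2 = x then w y' else 0)
            = if x1 = x then (if x2 = x then w y * M (x1,y) (x2,y') * w y' else 0) else 0 := by
          intro x1 y x2 y'
          split_ifs <;> simp
        simp only [e2]
        have outer : ∀ x1, x1 ≠ x → (∑ y, ∑ x2, ∑ y', if x1 = x
            then (if x2 = x then w y * M (x1,y) (x2,y') * w y' else 0) else 0) = 0 := by
          intro x1 h
          exact Finset.sum_eq_zero fun y _ => Finset.sum_eq_zero fun x2 _ =>
            Finset.sum_eq_zero fun y' _ => if_neg h
        rw [Finset.sum_eq_single x (fun b _ hb => outer b hb)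
          (fun h => absurd (Finset.mem_univ x) h)]
        simp only [eq_self_iff_true, if_true]
        refine Finset.sum_congr rfl fun y _ => ?_
        rw [Finset.sum_eq_single x (fun b _ hb => Finset.sum_eq_zero fun y' _ => if_neg hb)
          (fun h => absurd (Finset.mem_univ x) h)]
        simp
      have etot : qf Q w = ∑ x : α, ∑ y, ∑ y', w y * M (x, y) (x, y') * w y' := by
        unfold qf
        have e3 : ∀ y y', w y * Q y y' * w y' = ∑ x, w y * M (x,y) (x,y') * w y' := by
          intro y y'
          simp only [hQ, Matrix.of_apply, Finset.mul_sum, Finset.sum_mul]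
        simp only [e3]
        have s1 : ∀ y : β, (∑ y' : β, ∑ x : α, w y * M (x,y) (x,y') * w y')
            = ∑ x : α, ∑ y' : β, w y * M (x,y) (x,y') * w y' := fun y => Finset.sum_comm
        rw [Finset.sum_congr rfl fun y _ => s1 y]
        exact Finset.sum_comm
      rw [etot]
      refine Finset.sum_nonneg fun x _ => ?_
      rw [← hqx x]
      exact hvx x
    · have e1 : Q.trace = ∑ y, ∑ x, M (x,y) (x,y) := rfl
      rw [e1, Finset.sum_comm]
      have e2 : M.trace = ∑ p : α × β, M p p := rfl
      rw [e2, Fintype.sum_prod_type] at hMt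
      exact hMt
    · intro y y' h
      simp only [hQ, Matrix.of_apply]
      refine Finset.sum_eq_zero fun x _ => ?_
      exact hMe (x, y) (x, y') (Or.inr ⟨rfl, h⟩)
  have hb : sumE M ≤ ∑ p : α × β, ∑ q : α × β, N p.1 q.1 * M p q := by
    set NJ : Matrix α α ℝ := N - Matrix.of fun _ _ => (1:ℝ) with hNJdef
    have hK := inner_psd_nonneg (posSemidef_kron (show NJ.PosSemidef from hNJ)
      (posSemidef_allOnes (ι := β))) hMp
    have e : ∀ p q : α × β, (Matrix.of fun (p q : α × β) =>
        NJ p.1 q.1 * (Matrix.of fun _ _ : β => (1:ℝ)) p.2 q.2) p q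
          * M p q = N p.1 q.1 * M p q - M p q := by
      intro p q
      simp only [Matrix.of_apply, hNJdef, Matrix.sub_apply]
      ring
    rw [Finset.sum_congr rfl fun p _ => Finset.sum_congr rfl fun q _ => e p q] at hK
    simp only [Finset.sum_sub_distrib] at hK
    unfold sumE
    linarith
  have hc : ∑ p : α × β, ∑ q : α × β, N p.1 q.1 * M p q = (lovTheta X + ε) * sumE Q := by
    have e : (∑ p : α × β, ∑ q : α × β, N p.1 q.1 * M p q)
        = ∑ x, ∑ y, ∑ x', ∑ y', N x x' * M (x,y) (x',y') := by
      simp only [Fintype.sum_prod_type]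
    rw [e]
    have e2 : ∀ x : α, ∑ y, ∑ x', ∑ y', N x x' * M (x,y) (x',y')
        = ∑ x', ∑ y, ∑ y', N x x' * M (x,y) (x',y') := fun x => Finset.sum_comm
    rw [Finset.sum_congr rfl fun x _ => e2 x]
    have e3 : ∀ x : α, ∑ x', ∑ y, ∑ y', N x x' * M (x,y) (x',y')
        = N x x * ∑ y, ∑ y', M (x,y) (x,y') := by
      intro x
      rw [Finset.sum_eq_single x]
      · rw [Finset.mul_sum]
        refine Finset.sum_congr rfl fun y _ => ?_
        rw [Finset.mul_sum]
      · intro x' _ hne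
        by_cases hadj : X.Adj x x'
        · refine Finset.sum_eq_zero fun y _ => Finset.sum_eq_zero fun y' _ => ?_
          rw [hMe (x,y) (x',y') (Or.inl hadj), mul_zero]
        · have : N x x' = 0 := hNo x x' (fun h => hne h.symm) hadj
          refine Finset.sum_eq_zero fun y _ => Finset.sum_eq_zero fun y' _ => ?_
          rw [this, zero_mul]
      · intro h
        exact absurd (Finset.mem_univ x) h
    rw [Finset.sum_congr rfl fun x _ => e3 x]
    have e4 : sumE Q = ∑ x : α, ∑ y, ∑ y', M (x,y) (x,y') := by
      unfold sumE
      have : ∀ y y', Q y y' = ∑ x, M (x,y) (x,y') := fun y y' => rfl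
      simp only [this]
      have s1 : ∀ y : β, (∑ y' : β, ∑ x : α, M (x,y) (x,y'))
          = ∑ x : α, ∑ y' : β, M (x,y) (x,y') := fun y => Finset.sum_comm
      rw [Finset.sum_congr rfl fun y _ => s1 y]
      exact Finset.sum_comm
    rw [e4, Finset.mul_sum]
    refine Finset.sum_congr rfl fun x _ => ?_
    rw [hNd x]
  have hd : sumE Q ≤ lovTheta Y := le_lovTheta hQfeas
  have hpos : 0 ≤ lovTheta X + ε := by
    have := lovTheta_nonneg X; linarith
  calc sumE M ≤ (lovTheta X + ε) * sumE Q := by rw [← hc]; exact hb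
    _ ≤ (lovTheta X + ε) * lovTheta Y := mul_le_mul_of_nonneg_left hd hpos

lemma lex_le [DecidableEq α] [Nonempty α] [Nonempty β] (X : SimpleGraph α) (Y : SimpleGraph β) :
    lovTheta (lexProd X Y) ≤ lovTheta X * lovTheta Y := by
  rw [lovTheta_eq]
  have : Nonempty (α × β) := inferInstance
  refine csSup_le (feas_nonempty _) ?_
  rintro r ⟨M, hM, rfl⟩
  refine le_of_forall_pos_le_add ?_
  intro η hη
  have hY := lovTheta_nonneg Y
  set ε : ℝ := η / (lovTheta Y + 1) with hε
  have hεpos : 0 < ε := by positivity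
  have hcb := core_bound X Y hM hεpos
  have : ε * lovTheta Y ≤ η := by
    rw [hε, div_mul_eq_mul_div, div_le_iff₀ (by positivity)]
    nlinarith
  nlinarith [hcb]

end LexBound

end LovAux

theorem stmt_13 {α β : Type*} [Fintype α] [Fintype β]
    (X : SimpleGraph α) (Y : SimpleGraph β) :
    lovTheta (lexProd X Y) = lovTheta X * lovTheta Y ∧
    lovTheta X * lovTheta Y = lovTheta (disjProd X Y) := by
  classical
  rcases isEmpty_or_nonempty α with ha | ha
  · have h1 : IsEmpty (α × β) := inferInstance
    rw [LovAux.lovTheta_empty ha X, LovAux.lovTheta_empty h1 (lexProd X Y),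
      LovAux.lovTheta_empty h1 (disjProd X Y)]
    simp
  · rcases isEmpty_or_nonempty β with hb | hb
    · have h1 : IsEmpty (α × β) := inferInstance
      rw [LovAux.lovTheta_empty hb Y, LovAux.lovTheta_empty h1 (lexProd X Y),
        LovAux.lovTheta_empty h1 (disjProd X Y)]
      simp
    · have h1 := LovAux.mul_le_disj X Y
      have h2 := LovAux.disj_le_lex X Y
      have h3 := LovAux.lex_le X Y
      constructor <;> linarith
end

section
/- Let X be a finite simple graph, let d ≥ 1, and let P_x (x ∈ V(X)) be real symmetric idempotent d×d matrices (projectors) such that P_x P_{x'} = 0 whenever x is adjacent to x'. Then (∑_{x∈V(X)} rank(P_x))/d ≤ ϑ^{CS+}(X), where ϑ^{CS+}(X) is the supremum of ∑_{x,x'} M_{x,x'} over completely positive semidefinite matrices M indexed by V(X) with tr(M) = 1 and M_{x,x'} = 0 whenever x is adjacent to x'. -/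
open Matrix

/-- A real matrix is completely positive if it equals `Pᵀ * P`
for some entrywise nonnegative real matrix `P`. -/
def IsCP {ι : Type*} (H : Matrix ι ι ℝ) : Prop :=
  ∃ (n : ℕ) (P : Matrix (Fin n) ι ℝ), (∀ i j, 0 ≤ P i j) ∧ H = Pᵀ * P

/-- A real matrix indexed by `ι` is completely positive semidefinite if it is the Gram
matrix of real positive semidefinite `d × d` matrices for some `d ≥ 1`. -/
def IsCPSD {ι : Type*} (H : Matrix ι ι ℝ) : Prop :=
  ∃ d : ℕ, 0 < d ∧ ∃ ρ : ι → Matrix (Fin d) (Fin d) ℝ,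
    (∀ i, (ρ i).PosSemidef) ∧ ∀ i j, H i j = (ρ i * ρ j).trace

/-- A real matrix is doubly nonnegative if it is positive semidefinite
and entrywise nonnegative. -/
def IsDNN {ι : Type*} [Fintype ι] (H : Matrix ι ι ℝ) : Prop :=
  H.PosSemidef ∧ ∀ i j, 0 ≤ H i j

/-- The CPSD variant of the Lovász theta function, `ϑ^{CS₊}(Z)`. -/
noncomputable def thetaCSPD {γ : Type*} [Fintype γ] (Z : SimpleGraph γ) : ℝ :=
  sSup {r : ℝ | ∃ M : Matrix γ γ ℝ, IsCPSD M ∧ M.trace = 1 ∧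
    (∀ z z', Z.Adj z z' → M z z' = 0) ∧ r = ∑ z, ∑ z', M z z'}

lemma trace_transpose_mul_self_nonneg' {n : Type*} [Fintype n] (A : Matrix n n ℝ) :
    0 ≤ (Aᵀ * A).trace := by
  rw [Matrix.trace]
  refine Finset.sum_nonneg fun j _ => ?_
  simp only [Matrix.diag_apply, Matrix.mul_apply, Matrix.transpose_apply]
  exact Finset.sum_nonneg fun i _ => mul_self_nonneg _

lemma trace_sq_nonneg' {n : Type*} [Fintype n] {A : Matrix n n ℝ} (hA : Aᵀ = A) :
    0 ≤ (A * A).trace := by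
  rw [show A * A = Aᵀ * A by rw [hA]]
  exact trace_transpose_mul_self_nonneg' A

lemma trace_eq_sum_eigenvalues' {n : Type*} [Fintype n] [DecidableEq n]
    {A : Matrix n n ℝ} (hA : A.IsHermitian) : A.trace = ∑ i, hA.eigenvalues i := by
  conv_lhs => rw [hA.spectral_theorem]
  rw [Unitary.conjStarAlgAut_apply]
  rw [Matrix.trace_mul_cycle]
  rw [Matrix.UnitaryGroup.star_mul_self, one_mul, Matrix.trace_diagonal]
  simp

lemma eig_idem' {n : Type*} [Fintype n] [DecidableEq n]
    {A : Matrix n n ℝ} (hA : A.IsHermitian) (h : A * A = A) (i : n) :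
    hA.eigenvalues i = 0 ∨ hA.eigenvalues i = 1 := by
  set v := ⇑(hA.eigenvectorBasis i) with hv
  have hvne : v ≠ 0 := by
    have := hA.eigenvectorBasis.orthonormal.ne_zero i
    intro hc
    apply this
    ext j
    exact congrFun hc j
  have h1 : A *ᵥ v = hA.eigenvalues i • v := hA.mulVec_eigenvectorBasis i
  have h2 : A *ᵥ (A *ᵥ v) = A *ᵥ v := by rw [mulVec_mulVec, h]
  rw [h1, Matrix.mulVec_smul, h1, smul_smul] at h2
  have h3 : (hA.eigenvalues i * hA.eigenvalues i - hA.eigenvalues i) • v = 0 := by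
    rw [sub_smul, h2, sub_self]
  rcases smul_eq_zero.mp h3 with h4 | h4
  · have h5 : hA.eigenvalues i * (hA.eigenvalues i - 1) = 0 := by linear_combination h4
    rcases mul_eq_zero.mp h5 with h6 | h6
    · exact Or.inl h6
    · exact Or.inr (by linarith)
  · exact absurd h4 hvne

lemma rank_cast_eq_trace' {n : Type*} [Fintype n] [DecidableEq n]
    {A : Matrix n n ℝ} (hA : Aᵀ = A) (h : A * A = A) :
    ((A.rank : ℝ)) = A.trace := by
  classical
  have hH : A.IsHermitian := by
    rw [Matrix.IsHermitian, conjTranspose_eq_transpose_of_trivial, hA]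
  have heig := eig_idem' hH h
  rw [trace_eq_sum_eigenvalues' hH, hH.rank_eq_card_non_zero_eigs]
  rw [← Finset.sum_filter_ne_zero Finset.univ]
  have : ∑ i ∈ Finset.univ.filter (fun i => hH.eigenvalues i ≠ 0), hH.eigenvalues i
       = ∑ i ∈ Finset.univ.filter (fun i => hH.eigenvalues i ≠ 0), (1:ℝ) := by
    refine Finset.sum_congr rfl fun i hi => ?_
    rcases heig i with h0 | h1
    · exact absurd h0 (Finset.mem_filter.mp hi).2
    · exact h1
  rw [this, Finset.sum_const, nsmul_eq_mul, mul_one, Fintype.card_subtype]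

lemma trace_mul_le' {n : Type*} [Fintype n] {A B : Matrix n n ℝ}
    (hA : Aᵀ = A) (hB : Bᵀ = B) :
    (A * B).trace ≤ ((A * A).trace + (B * B).trace) / 2 := by
  have h0 : 0 ≤ ((A - B) * (A - B)).trace := by
    apply trace_sq_nonneg'
    rw [Matrix.transpose_sub, hA, hB]
  have hexp : ((A - B) * (A - B)).trace
      = (A * A).trace - (A * B).trace - (B * A).trace + (B * B).trace := by
    rw [Matrix.sub_mul, Matrix.mul_sub, Matrix.mul_sub, Matrix.trace_sub, Matrix.trace_sub,
      Matrix.trace_sub]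
    ring
  have hc : (B * A).trace = (A * B).trace := Matrix.trace_mul_comm B A
  rw [hexp, hc] at h0
  linarith

lemma theta_bddAbove' {γ : Type*} [Fintype γ] (Z : SimpleGraph γ) :
    BddAbove {r : ℝ | ∃ M : Matrix γ γ ℝ, IsCPSD M ∧ M.trace = 1 ∧
      (∀ z z', Z.Adj z z' → M z z' = 0) ∧ r = ∑ z, ∑ z', M z z'} := by
  refine ⟨(Fintype.card γ : ℝ), ?_⟩
  rintro r ⟨M, ⟨e, he, ρ, hpsd, hM⟩, htr, hadj, rfl⟩
  have hsymm : ∀ z, (ρ z)ᵀ = ρ z := fun z => by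
    have := (hpsd z).isHermitian
    rwa [Matrix.IsHermitian, conjTranspose_eq_transpose_of_trivial] at this
  have hb : ∀ z z', M z z' ≤ (M z z + M z' z') / 2 := fun z z' => by
    rw [hM z z', hM z z, hM z' z']
    exact trace_mul_le' (hsymm z) (hsymm z')
  calc ∑ z, ∑ z', M z z' ≤ ∑ z, ∑ z', (M z z + M z' z') / 2 := by
        exact Finset.sum_le_sum fun z _ => Finset.sum_le_sum fun z' _ => hb z z'
    _ = ∑ z : γ, ∑ z' : γ, (M z z / 2) + ∑ z : γ, ∑ z' : γ, (M z' z' / 2) := by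
        rw [← Finset.sum_add_distrib]
        refine Finset.sum_congr rfl fun z _ => ?_
        rw [← Finset.sum_add_distrib]
        exact Finset.sum_congr rfl fun z' _ => by ring
    _ = (Fintype.card γ : ℝ) := by
        have hMtr : (∑ z, M z z) = 1 := by
          simpa [Matrix.trace, Matrix.diag] using htr
        have hA : ∑ z : γ, ∑ _z' : γ, (M z z / 2) = (Fintype.card γ : ℝ) * (1 / 2) := by
          simp only [Finset.sum_const, Finset.card_univ, nsmul_eq_mul]
          rw [← Finset.mul_sum, ← Finset.sum_div, hMtr]
        have hB : ∑ _z : γ, ∑ z' : γ, (M z' z' / 2) = (Fintype.card γ : ℝ) * (1 / 2) := by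
          rw [Finset.sum_const, Finset.card_univ, nsmul_eq_mul, ← Finset.sum_div, hMtr]
        rw [hA, hB]
        ring

lemma theta_one_mem' {γ : Type*} [Fintype γ] [Nonempty γ] (Z : SimpleGraph γ) :
    (1:ℝ) ∈ {r : ℝ | ∃ M : Matrix γ γ ℝ, IsCPSD M ∧ M.trace = 1 ∧
      (∀ z z', Z.Adj z z' → M z z' = 0) ∧ r = ∑ z, ∑ z', M z z'} := by
  classical
  obtain ⟨z₀⟩ := (inferInstance : Nonempty γ)
  set ρ : γ → Matrix (Fin 1) (Fin 1) ℝ := fun z => if z = z₀ then 1 else 0 with hρ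
  set M : Matrix γ γ ℝ := fun z z' => (ρ z * ρ z').trace with hMdef
  have hval : ∀ z z', M z z' = if z = z₀ ∧ z' = z₀ then 1 else 0 := by
    intro z z'
    show (ρ z * ρ z').trace = _
    by_cases h1 : z = z₀ <;> by_cases h2 : z' = z₀ <;>
      simp [hρ, h1, h2]
  refine ⟨M, ⟨1, one_pos, ρ, ?_, fun i j => rfl⟩, ?_, ?_, ?_⟩
  · intro z
    simp only [hρ]
    split_ifs
    · exact Matrix.PosSemidef.one
    · exact Matrix.PosSemidef.zero
  · rw [Matrix.trace]
    have : ∀ z, M.diag z = if z = z₀ then (1:ℝ) else 0 := by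
      intro z; simp [Matrix.diag_apply, hval z z, and_self]
    rw [Finset.sum_congr rfl fun z _ => this z]
    simp
  · intro z z' hadj
    rw [hval z z']
    split_ifs with h
    · obtain ⟨h1, h2⟩ := h
      subst h1; subst h2
      exact (Z.irrefl hadj).elim
    · rfl
  · have : ∀ z, ∑ z', M z z' = if z = z₀ then (1:ℝ) else 0 := by
      intro z
      rw [Finset.sum_congr rfl fun z' _ => hval z z']
      by_cases h : z = z₀ <;> simp [h]
    rw [Finset.sum_congr rfl fun z _ => this z]
    simp

theorem stmt_18 {α : Type*} [Fintype α] (X : SimpleGraph α)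
    (d : ℕ) (hd : 0 < d) (P : α → Matrix (Fin d) (Fin d) ℝ)
    (hsymm : ∀ x, (P x).IsSymm) (hidem : ∀ x, P x * P x = P x)
    (horth : ∀ x x', X.Adj x x' → P x * P x' = 0) :
    (∑ x, ((P x).rank : ℝ)) / d ≤ thetaCSPD X := by
  classical
  have hranktr : ∀ x, ((P x).rank : ℝ) = (P x).trace := fun x =>
    rank_cast_eq_trace' (hsymm x) (hidem x)
  set T : ℝ := ∑ x, (P x).trace with hT
  have hsum : ∑ x, ((P x).rank : ℝ) = T := Finset.sum_congr rfl fun x _ => hranktr x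
  rw [hsum]
  have hTnn : 0 ≤ T := by
    rw [← hsum]
    exact Finset.sum_nonneg fun x _ => Nat.cast_nonneg _
  rcases isEmpty_or_nonempty α with hα | hα
  · have hempty : {r : ℝ | ∃ M : Matrix α α ℝ, IsCPSD M ∧ M.trace = 1 ∧
        (∀ z z', X.Adj z z' → M z z' = 0) ∧ r = ∑ z, ∑ z', M z z'} = ∅ := by
      ext r
      simp only [Set.mem_setOf_eq, Set.mem_empty_iff_false, iff_false]
      rintro ⟨M, _, htr, _, _⟩
      rw [Matrix.trace, Finset.univ_eq_empty, Finset.sum_empty] at htr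
      exact one_ne_zero htr.symm
    rw [thetaCSPD, hempty, Real.sSup_empty]
    have : T = 0 := by rw [hT, Finset.univ_eq_empty, Finset.sum_empty]
    rw [this, zero_div]
  · rcases eq_or_lt_of_le hTnn with hT0 | hTpos
    · rw [← hT0, zero_div]
      exact le_trans zero_le_one (le_csSup (theta_bddAbove' X) (theta_one_mem' X))
    · -- main case
      set S : Matrix (Fin d) (Fin d) ℝ := ∑ x, P x with hS
      have hSsymm : Sᵀ = S := by
        rw [hS, Matrix.transpose_sum]
        exact Finset.sum_congr rfl fun x _ => hsymm x
      have hStr : S.trace = T := by rw [hS, Matrix.trace_sum]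
      -- Cauchy-Schwarz : T^2 / d ≤ tr (S*S)
      have hCS : T ^ 2 / d ≤ (S * S).trace := by
        set c : ℝ := T / d with hc
        have h0 : 0 ≤ ((S - c • 1) * (S - c • 1)).trace := by
          apply trace_sq_nonneg'
          rw [Matrix.transpose_sub, hSsymm, Matrix.transpose_smul, Matrix.transpose_one]
        have ha : S * (c • 1) = c • S := by rw [Matrix.mul_smul, Matrix.mul_one]
        have hb : (c • (1 : Matrix (Fin d) (Fin d) ℝ)) * S = c • S := by
          rw [Matrix.smul_mul, Matrix.one_mul]
        have hcc : (c • (1 : Matrix (Fin d) (Fin d) ℝ)) * (c • 1) = (c * c) • 1 := by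
          rw [Matrix.smul_mul, Matrix.one_mul, smul_smul]
        have hmat : (S - c • 1) * (S - c • 1) = S * S - (2 * c) • S + (c * c) • 1 := by
          rw [Matrix.sub_mul, Matrix.mul_sub, Matrix.mul_sub, ha, hb, hcc]
          module
        rw [hmat, Matrix.trace_add, Matrix.trace_sub, Matrix.trace_smul, Matrix.trace_smul,
          Matrix.trace_one, hStr] at h0
        simp only [smul_eq_mul, Fintype.card_fin] at h0
        have hdpos : (0:ℝ) < d := by exact_mod_cast hd
        have hne : (d:ℝ) ≠ 0 := ne_of_gt hdpos
        have e1 : c * T = T ^ 2 / d := by rw [hc]; ring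
        have e2 : c * c * (d:ℝ) = T ^ 2 / d := by
          rw [hc]; field_simp
        nlinarith [h0, e1, e2]
      -- the feasible matrix
      set t : ℝ := (Real.sqrt T)⁻¹ with ht
      have hsT : Real.sqrt T > 0 := Real.sqrt_pos.mpr hTpos
      have htpos : 0 < t := inv_pos.mpr hsT
      have ht2 : t * t = T⁻¹ := by
        rw [ht, ← mul_inv]
        rw [Real.mul_self_sqrt (le_of_lt hTpos)]
      set ρ : α → Matrix (Fin d) (Fin d) ℝ := fun x => t • P x with hρ
      have hρpsd : ∀ x, (ρ x).PosSemidef := by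
        intro x
        have hfac : ρ x = (Real.sqrt t • P x)ᴴ * (Real.sqrt t • P x) := by
          rw [conjTranspose_eq_transpose_of_trivial, Matrix.transpose_smul, (hsymm x).eq]
          rw [Matrix.smul_mul, Matrix.mul_smul, smul_smul,
            Real.mul_self_sqrt (le_of_lt htpos), hidem x]
        rw [hfac]
        exact Matrix.posSemidef_conjTranspose_mul_self _
      have hρmul : ∀ x y, (ρ x * ρ y).trace = (P x * P y).trace / T := by
        intro x y
        rw [hρ]
        rw [Matrix.smul_mul, Matrix.mul_smul, smul_smul, Matrix.trace_smul, ht2]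
        rw [smul_eq_mul, inv_mul_eq_div]
      set M : Matrix α α ℝ := fun x y => (ρ x * ρ y).trace with hMdef
      have hMval : ∀ x y, M x y = (P x * P y).trace / T := fun x y => hρmul x y
      have hmem : (S * S).trace / T ∈ {r : ℝ | ∃ M : Matrix α α ℝ, IsCPSD M ∧ M.trace = 1 ∧
          (∀ z z', X.Adj z z' → M z z' = 0) ∧ r = ∑ z, ∑ z', M z z'} := by
        refine ⟨M, ⟨d, hd, ρ, hρpsd, fun i j => rfl⟩, ?_, ?_, ?_⟩
        · rw [Matrix.trace]
          have : ∀ x, M.diag x = (P x).trace / T := by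
            intro x
            rw [Matrix.diag_apply]
            show M x x = _
            rw [hMval x x, hidem x]
          rw [Finset.sum_congr rfl fun x _ => this x, ← Finset.sum_div, ← hT,
            div_self (ne_of_gt hTpos)]
        · intro x y hadj
          show M x y = 0
          rw [hMval x y, horth x y hadj, Matrix.trace_zero, zero_div]
        · have hSS : (S * S).trace = ∑ x, ∑ y, (P x * P y).trace := by
            rw [hS, Finset.sum_mul_sum]
            rw [Matrix.trace_sum]
            exact Finset.sum_congr rfl fun x _ => Matrix.trace_sum _ _
          rw [hSS]
          rw [Finset.sum_div]
          refine Finset.sum_congr rfl fun x _ => ?_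
          rw [Finset.sum_div]
          exact Finset.sum_congr rfl fun y _ => (hMval x y).symm
      have hle : T / d ≤ (S * S).trace / T := by
        rw [div_le_div_iff₀ (by exact_mod_cast hd) hTpos]
        calc T * T = T ^ 2 := by ring
          _ = (T ^ 2 / d) * d := by field_simp
          _ ≤ (S * S).trace * d := by
              apply mul_le_mul_of_nonneg_right hCS (le_of_lt (by exact_mod_cast hd))
      exact le_trans hle (le_csSup (theta_bddAbove' X) hmem)
end

section
/- Let X be a finite simple graph, let d, r ≥ 1, and let P_x (x ∈ V(X)) be real symmetric idempotent d×d matrices, each of rank r, such that P_x P_{x'} = 0 whenever x is adjacent to x'. Then Θ^{CS+}(X) ≤ d/r, where Θ^{CS+}(X) is the infimum of t ∈ ℝ such that there exists a completely positive semidefinite matrix N indexed by V(X) with N_{x,x} = t for all x, N_{x,x'} = 0 whenever x is adjacent to x', and N − J positive semidefinite (J the all-ones matrix). -/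
open Matrix

/-- The CPSD variant `Θ^{CS₊}(Z)` of the theta function of the complement. -/
noncomputable def ThetaCSPD {γ : Type*} [Fintype γ] (Z : SimpleGraph γ) : ℝ :=
  sInf {t : ℝ | ∃ N : Matrix γ γ ℝ, IsCPSD N ∧ (∀ z, N z z = t) ∧
    (∀ z z', Z.Adj z z' → N z z' = 0) ∧
    (N - Matrix.of fun _ _ => (1 : ℝ)).PosSemidef}

private lemma trace_of_idem {d : ℕ} (A : Matrix (Fin d) (Fin d) ℝ) (h : A * A = A) :
    A.trace = (A.rank : ℝ) := by
  have hproj : LinearMap.IsProj (LinearMap.range A.mulVecLin) A.mulVecLin := by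
    refine ⟨fun x => LinearMap.mem_range_self _ x, ?_⟩
    rintro x ⟨y, rfl⟩
    have hc : A.mulVecLin ∘ₗ A.mulVecLin = A.mulVecLin := by
      rw [← Matrix.mulVecLin_mul, h]
    exact congrFun (congrArg DFunLike.coe hc) y
  have ht := hproj.trace
  rw [LinearMap.trace_eq_matrix_trace ℝ (Pi.basisFun ℝ (Fin d)),
    LinearMap.toMatrix_eq_toMatrix'] at ht
  rw [Matrix.rank, ← ht]
  congr 1
  rw [← Matrix.toLin'_apply', LinearMap.toMatrix'_toLin']

theorem stmt_19 {α : Type*} [Fintype α] (X : SimpleGraph α)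
    (d r : ℕ) (hd : 0 < d) (hr : 0 < r) (P : α → Matrix (Fin d) (Fin d) ℝ)
    (hsymm : ∀ x, (P x).IsSymm) (hidem : ∀ x, P x * P x = P x)
    (hrank : ∀ x, (P x).rank = r)
    (horth : ∀ x x', X.Adj x x' → P x * P x' = 0) :
    ThetaCSPD X ≤ (d : ℝ) / r := by
  have hrpos : (0:ℝ) < r := by exact_mod_cast hr
  have hdpos : (0:ℝ) < d := by exact_mod_cast hd
  set c : ℝ := (d : ℝ) / (r : ℝ)^2 with hc
  have hcpos : 0 < c := by positivity
  have htr : ∀ x, (P x).trace = (r : ℝ) := fun x => by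
    rw [trace_of_idem (P x) (hidem x), hrank x]
  have hH : ∀ x, (P x)ᴴ = P x := fun x => by
    rw [conjTranspose_eq_transpose_of_trivial]; exact (hsymm x).eq
  set N : Matrix α α ℝ := Matrix.of (fun x y => c * ((P x * P y).trace)) with hNdef
  set S : Set ℝ := {t : ℝ | ∃ N : Matrix α α ℝ, IsCPSD N ∧ (∀ z, N z z = t) ∧
    (∀ z z', X.Adj z z' → N z z' = 0) ∧
    (N - Matrix.of fun _ _ => (1 : ℝ)).PosSemidef} with hS
  have hmem : (d:ℝ)/r ∈ S := by
    refine ⟨N, ?_, ?_, ?_, ?_⟩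
    · -- IsCPSD
      refine ⟨d, hd, fun x => Real.sqrt c • P x, fun x => ?_, fun x y => ?_⟩
      · show (Real.sqrt c • P x).PosSemidef
        have key : Real.sqrt c • P x
            = ((Real.sqrt (Real.sqrt c)) • P x)ᴴ * ((Real.sqrt (Real.sqrt c)) • P x) := by
          simp only [conjTranspose_smul, hH x, star_trivial, smul_mul_smul_comm, hidem x,
            smul_smul]
          rw [Real.mul_self_sqrt (Real.sqrt_nonneg c)]
        rw [key]
        exact posSemidef_conjTranspose_mul_self _
      · show N x y = ((Real.sqrt c • P x) * (Real.sqrt c • P y)).trace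
        rw [hNdef]
        simp only [Matrix.of_apply]
        rw [smul_mul_smul_comm, Real.mul_self_sqrt hcpos.le, trace_smul, smul_eq_mul]
    · intro z
      simp only [hNdef, Matrix.of_apply]
      rw [hidem z, htr z]
      field_simp [hc]
      rw [hc, div_mul_cancel₀ _ (by positivity)]
    · intro z z' hzz'
      simp [hNdef, horth z z' hzz']
    · refine Matrix.PosSemidef.of_dotProduct_mulVec_nonneg ?_ ?_
      · rw [IsHermitian, conjTranspose_eq_transpose_of_trivial]
        ext i j
        simp only [transpose_apply, Matrix.sub_apply, Matrix.of_apply, hNdef]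
        rw [trace_mul_comm]
      · intro v
        simp only [star_trivial]
        set M : Matrix (Fin d) (Fin d) ℝ := ∑ x, v x • P x with hM
        have hMsymm : ∀ i j, M i j = M j i := by
          intro i j
          simp only [hM, Matrix.sum_apply, Matrix.smul_apply, smul_eq_mul]
          refine Finset.sum_congr rfl fun x _ => ?_
          have h2 := congrFun (congrFun (hsymm x).eq j) i
          simp only [transpose_apply] at h2
          rw [h2]
        have hMM : (M * M).trace = ∑ x, ∑ y, v x * v y * (P x * P y).trace := by
          rw [hM, Finset.sum_mul_sum]
          rw [trace_sum]
          refine Finset.sum_congr rfl fun x _ => ?_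
          rw [trace_sum]
          refine Finset.sum_congr rfl fun y _ => ?_
          rw [smul_mul_smul_comm, trace_smul, smul_eq_mul]
        have hMtr : M.trace = (∑ x, v x) * r := by
          rw [hM, trace_sum, Finset.sum_mul]
          exact Finset.sum_congr rfl fun x _ => by rw [trace_smul, htr x, smul_eq_mul]
        have hqf : v ⬝ᵥ (N - Matrix.of fun _ _ => (1:ℝ)).mulVec v
            = c * (M * M).trace - (∑ x, v x)^2 := by
          rw [hMM]
          simp only [dotProduct, mulVec, Matrix.sub_apply, Matrix.of_apply, hNdef, sq]
          rw [Finset.sum_mul_sum]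
          simp only [Finset.mul_sum]
          rw [← Finset.sum_sub_distrib]
          refine Finset.sum_congr rfl fun x _ => ?_
          rw [← Finset.sum_sub_distrib]
          refine Finset.sum_congr rfl fun y _ => ?_
          ring
        rw [hqf]
        have hT2 : (M * M).trace = ∑ i, ∑ j, (M i j)^2 := by
          simp only [Matrix.trace, Matrix.diag, Matrix.mul_apply]
          refine Finset.sum_congr rfl fun i _ => Finset.sum_congr rfl fun j _ => ?_
          rw [hMsymm j i, sq]
        have hQ : ∑ i, (M i i)^2 ≤ ∑ i, ∑ j, (M i j)^2 := by
          refine Finset.sum_le_sum fun i _ => ?_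
          have h3 : (M i i)^2 = ∑ j ∈ {i}, (M i j)^2 := by simp
          rw [h3]
          exact Finset.sum_le_sum_of_subset_of_nonneg (Finset.subset_univ _)
            (fun j _ _ => sq_nonneg _)
        have hCS : (M.trace)^2 ≤ (d:ℝ) * ∑ i, (M i i)^2 := by
          have h4 := sq_sum_le_card_mul_sum_sq (s := (Finset.univ : Finset (Fin d)))
            (f := fun i => M i i)
          simpa [Matrix.trace, Matrix.diag] using h4
        have key : M.trace^2 ≤ (d:ℝ) * ∑ i, ∑ j, (M i j)^2 :=
          le_trans hCS (mul_le_mul_of_nonneg_left hQ hdpos.le)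
        have hsum : (∑ x, v x) = M.trace / r := by
          rw [hMtr]; field_simp
        have hr2 : (0:ℝ) < (r:ℝ)^2 := by positivity
        rw [hsum, hT2, div_pow, hc, div_mul_eq_mul_div, sub_nonneg]
        gcongr
  rcases isEmpty_or_nonempty α with hα | hα
  · have hall : ∀ t : ℝ, t ∈ S := by
      intro t
      refine ⟨0, ⟨1, one_pos, fun _ => 0, fun i => Matrix.PosSemidef.zero, fun i j => by simp⟩,
        fun z => isEmptyElim z, fun z _ _ => isEmptyElim z, ?_⟩
      refine Matrix.PosSemidef.of_dotProduct_mulVec_nonneg ?_ ?_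
      · ext i j; exact isEmptyElim i
      · intro x; simp [dotProduct]
    have hnb : ¬ BddBelow S := by
      rintro ⟨b, hb⟩
      have h1 := hb (hall (b - 1))
      linarith
    rw [ThetaCSPD, ← hS, Real.sInf_of_not_bddBelow hnb]
    positivity
  · have hbdd : BddBelow S := by
      refine ⟨0, fun t ht => ?_⟩
      obtain ⟨Nm, _, hdiag, _, hpsd⟩ := ht
      obtain ⟨z⟩ := hα
      classical
      have h0 := hpsd.dotProduct_mulVec_nonneg (Pi.single z 1)
      simp only [star_trivial, dotProduct, mulVec, Matrix.sub_apply, Matrix.of_apply] at h0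
      have hcomp : ∀ x : α, (Pi.single z (1:ℝ) : α → ℝ) x *
            (∑ y, (Nm x y - 1) * (Pi.single z (1:ℝ) : α → ℝ) y)
          = (Pi.single z (Nm z z - 1) : α → ℝ) x := by
        intro x
        rcases eq_or_ne x z with rfl | hx
        · simp [Pi.single_apply, Finset.sum_ite_eq']
        · simp [Pi.single_apply, hx]
      rw [Finset.sum_congr rfl (fun x _ => hcomp x)] at h0
      simp only [Finset.sum_pi_single'] at h0
      simp only [Finset.mem_univ, if_true] at h0
      have h5 := hdiag z
      linarith
    rw [ThetaCSPD, ← hS]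
    exact csInf_le hbdd hmem
end
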